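/- arXiv:1806.04267 — 3 statements merged into one kernel-verified Lean document; each statement's English description precedes it below -/
import Mathlib

section
/- Let α be an irrational real number, q ≥ 2 an integer, k ≥ 1 an integer, and for each 0 ≤ j < k let (u_j, v_j) be a nonempty open interval contained in [0,1). Then the lower limit, as N → ∞, of (1/N²)·#{ (n,m) ∈ ℕ² : m ≥ 1, n + (k−1)m < N, and for every 0 ≤ j < k the fractional part of α·s_q(n + jm) lies in (u_j, v_j) } is strictly positive. In particular such an arithmetic progression n, n+m, …, n+(k−1)m exists. -/
open Finset Complex

noncomputable section

/-- A sequence is `q`-multiplicative if `f (m + n) = f m * f n` whenever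
`m < q ^ t` and `q ^ t ∣ n`. -/
def QMult (q : ℕ) (f : ℕ → ℂ) : Prop :=
  ∀ t m n : ℕ, m < q ^ t → q ^ t ∣ n → f (m + n) = f m * f n

/-- `e x = exp (2 π i x)`. -/
def e (x : ℝ) : ℂ := Complex.exp (2 * Real.pi * Complex.I * x)

/-- The weight `|ω|` of `ω ∈ {0,1}^s`: the number of coordinates equal to `1`. -/
def wt {s : ℕ} (ω : Fin s → Bool) : ℕ := (Finset.univ.filter fun i => ω i = true).card

/-- The vertex `n₀ + ω₁ n₁ + ⋯ + ω_s n_s` of a parallelepiped. -/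
def vertex (s : ℕ) (n : Fin (s + 1) → ℤ) (ω : Fin s → Bool) : ℤ :=
  n 0 + ∑ i : Fin s, if ω i then n i.succ else 0

/-- The set `Π_s(N)` of (s+1)-tuples all of whose associated vertices lie in `[0, N)`.
(Any such tuple automatically has all entries in `[-N, N]`.) -/
def PiSet (s N : ℕ) : Finset (Fin (s + 1) → ℤ) :=
  (Finset.Icc (fun _ => -(N : ℤ)) fun _ => (N : ℤ)).filter fun n =>
    ∀ ω : Fin s → Bool, 0 ≤ vertex s n ω ∧ vertex s n ω < N

/-- The Gowers product `∏_ω conj^{|ω|} f(n₀ + ω·n)`. -/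
def gowersTerm (s : ℕ) (f : ℕ → ℂ) (n : Fin (s + 1) → ℤ) : ℂ :=
  ∏ ω : Fin s → Bool, (starRingEnd ℂ)^[wt ω] (f (vertex s n ω).toNat)

/-- The Gowers average `‖f‖_{U^s[N]}^{2^s}` (as a complex number; it is in fact
real and nonnegative). -/
def gowersAvg (s N : ℕ) (f : ℕ → ℂ) : ℂ :=
  (∑ n ∈ PiSet s N, gowersTerm s f n) / (PiSet s N).card

/-- The Gowers uniformity norm `‖f‖_{U^s[N]}`. -/
def gowersNorm (s N : ℕ) (f : ℕ → ℂ) : ℝ :=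
  (gowersAvg s N f).re ^ ((1 : ℝ) / 2 ^ s)

/-- Sum of digits of `n` in base `q`. -/
def digitSum (q n : ℕ) : ℕ := (Nat.digits q n).sum

end

namespace Aux


variable {q : ℕ}

lemma ds_zero (q : ℕ) : digitSum q 0 = 0 := by simp [digitSum]

lemma ds_cons (hq : 2 ≤ q) {d : ℕ} (hd : d < q) (x : ℕ) :
    digitSum q (d + q * x) = d + digitSum q x := by
  rcases Nat.eq_zero_or_pos (d + q * x) with h | h
  · have hd0 : d = 0 := by omega
    have hx0 : x = 0 := by
      rcases Nat.eq_zero_or_pos x with h' | h'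
      · exact h'
      · exfalso; nlinarith
    simp [hd0, hx0, ds_zero]
  · obtain ⟨n, hn⟩ : ∃ n, d + q * x = n + 1 := ⟨d + q * x - 1, by omega⟩
    obtain ⟨q', hq'⟩ : ∃ q', q = q' + 2 := ⟨q - 2, by omega⟩
    rw [digitSum, hn, hq', Nat.digits_add_two_add_one, List.sum_cons, ← hn, ← hq']
    have h1 : (d + q * x) % q = d := by
      rw [Nat.add_mul_mod_self_left, Nat.mod_eq_of_lt hd]
    have h2 : (d + q * x) / q = x := by
      rw [Nat.add_mul_div_left _ _ (by omega : 0 < q), Nat.div_eq_of_lt hd, Nat.zero_add]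
    rw [h1, h2]; rfl

lemma ds_split (hq : 2 ≤ q) (t : ℕ) : ∀ a b : ℕ, a < q ^ t →
    digitSum q (a + q ^ t * b) = digitSum q a + digitSum q b := by
  induction t with
  | zero =>
    intro a b ha
    have ha0 : a = 0 := by simpa [Nat.lt_one_iff] using ha
    subst ha0; simp [ds_zero]
  | succ t ih =>
    intro a b ha
    have hd : a % q < q := Nat.mod_lt _ (by omega)
    have key : a % q + q * (a / q + q ^ t * b) = a + q ^ (t+1) * b := by
      rw [Nat.mul_add, ← Nat.add_assoc, Nat.mod_add_div, ← Nat.mul_assoc, ← pow_succ']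
    have hdiv : a / q < q ^ t := by
      rw [Nat.div_lt_iff_lt_mul (by omega : 0 < q)]
      rwa [pow_succ] at ha
    rw [← key, ds_cons hq hd, ih _ _ hdiv]
    have ha' : a = a % q + q * (a / q) := (Nat.mod_add_div a q).symm
    nth_rewrite 3 [ha']
    rw [ds_cons hq hd]
    omega

lemma ds_digit (hq : 2 ≤ q) {d : ℕ} (hd : d < q) : digitSum q d = d := by
  have := ds_cons hq hd 0
  simpa [ds_zero] using this

lemma ds_pow_add (hq : 2 ≤ q) {L r : ℕ} (hr : r < q ^ L) :
    digitSum q (q ^ L + r) = 1 + digitSum q r := by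
  have h := ds_split hq L r 1 hr
  have h1 : digitSum q 1 = 1 := ds_digit hq (by omega)
  have e : q ^ L + r = r + q ^ L * 1 := by ring
  rw [e, h, h1]; ring

lemma ds_pow_sub (hq : 2 ≤ q) (L : ℕ) : ∀ c : ℕ, 1 ≤ c → c ≤ q ^ L →
    digitSum q (q ^ L - c) + digitSum q (c - 1) = L * (q - 1) := by
  induction L with
  | zero =>
    intro c h1 h2
    rw [pow_zero] at h2
    have : c = 1 := by omega
    subst this; simp [ds_zero]
  | succ L ih =>
    intro c h1 h2
    obtain ⟨d, e, hce, hdq, hd', he'⟩ :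
        ∃ d e, c - 1 = d + q * e ∧ d < q ∧ d = (c-1) % q ∧ e = (c-1) / q :=
      ⟨(c-1) % q, (c-1) / q, (Nat.mod_add_div (c-1) q).symm, Nat.mod_lt _ (by omega), rfl, rfl⟩
    have hqL : 1 ≤ q ^ L := Nat.one_le_pow _ _ (by omega)
    have heL : e < q ^ L := by
      rw [he', Nat.div_lt_iff_lt_mul (by omega : 0 < q), ← pow_succ]
      omega
    have hA : q ^ (L+1) = q * q ^ L := pow_succ' q L
    have hB : q * (e + 1) = q * e + q := by ring
    have hC : q * (e + 1) ≤ q * q ^ L := Nat.mul_le_mul_left q (by omega)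
    have hD : q * (q ^ L - (e+1)) = q * q ^ L - q * (e+1) := Nat.mul_sub q _ _
    have key : q ^ (L+1) - c = (q - 1 - d) + q * (q ^ L - (e + 1)) := by omega
    rw [key, ds_cons hq (by omega : q - 1 - d < q)]
    have ihe := ih (e + 1) (by omega) (by omega)
    have hsub : e + 1 - 1 = e := by omega
    rw [hsub] at ihe
    rw [hce, ds_cons hq hdq]
    have hr : (L + 1) * (q - 1) = L * (q-1) + (q-1) := by ring
    omega

lemma ds_blocks (hq : 2 ≤ q) (W r : ℕ) : ∀ (y : ℕ → ℕ), (∀ i < r, y i < q ^ W) →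
    digitSum q (∑ i ∈ Finset.range r, y i * q ^ (i * W)) =
      ∑ i ∈ Finset.range r, digitSum q (y i) := by
  induction r with
  | zero => intro y _; simp [ds_zero]
  | succ r ih =>
    intro y hy
    rw [Finset.sum_range_succ' (fun i => y i * q ^ (i * W)) r]
    have key : (∑ i ∈ Finset.range r, y (i+1) * q ^ ((i+1) * W)) + y 0 * q ^ (0 * W)
        = y 0 + q ^ W * (∑ i ∈ Finset.range r, y (i+1) * q ^ (i * W)) := by
      rw [Finset.mul_sum]
      simp only [Nat.zero_mul, pow_zero, Nat.mul_one]
      rw [Nat.add_comm]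
      congr 1
      apply Finset.sum_congr rfl
      intro i _
      have h' : (i+1) * W = W + i * W := by ring
      rw [h', pow_add]
      ring
    rw [key, ds_split hq W _ _ (hy 0 (by omega)), ih (fun i => y (i+1)) (fun i hi => hy (i+1) (by omega))]
    rw [Finset.sum_range_succ' (fun i => digitSum q (y i)) r]
    omega

lemma blocks_lt (hq : 2 ≤ q) (W r : ℕ) : ∀ (y : ℕ → ℕ), (∀ i < r, y i < q ^ W) →
    (∑ i ∈ Finset.range r, y i * q ^ (i * W)) < q ^ (r * W) := by
  induction r with
  | zero => intro y _; simp
  | succ r ih =>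
    intro y hy
    rw [Finset.sum_range_succ' (fun i => y i * q ^ (i * W)) r]
    have h0 : y 0 * q ^ (0 * W) = y 0 := by simp
    have key : (∑ i ∈ Finset.range r, y (i+1) * q ^ ((i+1) * W))
        = q ^ W * (∑ i ∈ Finset.range r, y (i+1) * q ^ (i * W)) := by
      rw [Finset.mul_sum]
      apply Finset.sum_congr rfl
      intro i _
      have h' : (i+1) * W = W + i * W := by ring
      rw [h', pow_add]; ring
    rw [h0, key]
    have h1 := ih (fun i => y (i+1)) (fun i hi => hy (i+1) (by omega))
    have h2 : y 0 < q ^ W := hy 0 (by omega)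
    have h3 : (r+1) * W = W + r * W := by ring
    rw [h3, pow_add]
    set S := ∑ i ∈ Finset.range r, y (i+1) * q ^ (i * W) with hS
    have h4 : q ^ W * S ≤ q ^ W * (q ^ (r * W) - 1) :=
      Nat.mul_le_mul_left _ (by omega)
    have h5 : q ^ W * (q ^ (r*W) - 1) = q ^ W * q ^ (r*W) - q ^ W := by
      rw [Nat.mul_sub, Nat.mul_one]
    have hq2 : 1 ≤ q ^ W := Nat.one_le_pow _ _ (by omega)
    have hq1 : q ^ W ≤ q ^ W * q ^ (r * W) :=
      Nat.le_mul_of_pos_right _ (pow_pos (by omega) _)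
    omega



lemma fract_diff_int (x y : ℝ) (h : Int.fract x = Int.fract y) : ∃ m : ℤ, x - y = m := by
  refine ⟨⌊x⌋ - ⌊y⌋, ?_⟩
  simp only [Int.fract] at h
  push_cast
  linarith

lemma small_step (θ : ℝ) (hθ : Irrational θ) {ε : ℝ} (hε : 0 < ε) :
    ∃ p : ℕ, 1 ≤ p ∧ ((0 < Int.fract (θ * p) ∧ Int.fract (θ * p) < ε) ∨
      (1 - ε < Int.fract (θ * p) ∧ Int.fract (θ * p) < 1)) := by
  obtain ⟨K, hK⟩ := exists_nat_gt (1 / ε)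
  have hK0 : 0 < (K : ℝ) := lt_trans (by positivity) hK
  have hK1 : (1:ℝ) ≤ K := by
    have : K ≠ 0 := by rintro rfl; simp at hK0
    exact_mod_cast Nat.one_le_iff_ne_zero.mpr this
  have h1K : 1 / (K:ℝ) ≤ 1 := by rw [div_le_one hK0]; exact hK1
  have hKε : 1 / (K : ℝ) < ε := (div_lt_iff₀ hK0).mpr (by
    rw [div_lt_iff₀ hε] at hK; linarith [mul_comm (K:ℝ) ε])
  have hmaps : ∀ i ∈ Finset.range (K + 1), (⌊(K : ℝ) * Int.fract (θ * i)⌋₊) ∈ Finset.range K := by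
    intro i _
    rw [Finset.mem_range]
    have h0 : (0:ℝ) ≤ (K : ℝ) * Int.fract (θ * i) := mul_nonneg hK0.le (Int.fract_nonneg _)
    have h1 : (K : ℝ) * Int.fract (θ * i) < K := by
      nth_rewrite 2 [← mul_one (K:ℝ)]
      exact mul_lt_mul_of_pos_left (Int.fract_lt_one _) hK0
    have := (Nat.floor_lt h0).mpr (by exact_mod_cast h1)
    exact_mod_cast this
  obtain ⟨i, hi, j, hj, hij, heq⟩ :=
    Finset.exists_ne_map_eq_of_card_lt_of_maps_to
      (by simp : (Finset.range K).card < (Finset.range (K+1)).card) hmaps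
  have main : ∀ i j : ℕ, i < j →
      ⌊(K : ℝ) * Int.fract (θ * i)⌋₊ = ⌊(K : ℝ) * Int.fract (θ * j)⌋₊ →
      ∃ p : ℕ, 1 ≤ p ∧ ((0 < Int.fract (θ * p) ∧ Int.fract (θ * p) < ε) ∨
        (1 - ε < Int.fract (θ * p) ∧ Int.fract (θ * p) < 1)) := by
    intro i j hlt hfl
    set fi := Int.fract (θ * i) with hfi
    set fj := Int.fract (θ * j) with hfj
    have hfi0 : 0 ≤ fi := Int.fract_nonneg _
    have hfj0 : 0 ≤ fj := Int.fract_nonneg _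
    have hfi1 : fi < 1 := Int.fract_lt_one _
    have hfj1 : fj < 1 := Int.fract_lt_one _
    have l1 : (⌊(K : ℝ) * fi⌋₊ : ℝ) ≤ K * fi := Nat.floor_le (mul_nonneg hK0.le hfi0)
    have l2 : (⌊(K : ℝ) * fj⌋₊ : ℝ) ≤ K * fj := Nat.floor_le (mul_nonneg hK0.le hfj0)
    have l3 : K * fi < ⌊(K : ℝ) * fi⌋₊ + 1 := Nat.lt_floor_add_one _
    have l4 : K * fj < ⌊(K : ℝ) * fj⌋₊ + 1 := Nat.lt_floor_add_one _
    rw [hfl] at l1 l3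
    have b1 : (K:ℝ) * (fj - fi) < 1 := by nlinarith
    have b2 : (K:ℝ) * (fi - fj) < 1 := by nlinarith
    have hclose1 : fj - fi < 1 / K := by rw [lt_div_iff₀ hK0]; nlinarith
    have hclose2 : -(1 / (K:ℝ)) < fj - fi := by
      rw [neg_lt]
      rw [lt_div_iff₀ hK0]; nlinarith
    refine ⟨j - i, by omega, ?_⟩
    have hcast : ((j - i : ℕ) : ℝ) = (j : ℝ) - i := by
      push_cast [Nat.cast_sub hlt.le]; ring
    have hfr : Int.fract (θ * ((j - i : ℕ) : ℝ)) = Int.fract (fj - fi) := by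
      have hsplit : θ * ((j - i : ℕ) : ℝ) = (fj - fi)
          + ((⌊θ * (j:ℝ)⌋ - ⌊θ * (i:ℝ)⌋ : ℤ) : ℝ) := by
        rw [hcast, hfj, hfi]
        simp only [Int.fract]
        push_cast
        ring
      rw [hsplit, Int.fract_add_intCast]
    have hne : fj - fi ≠ 0 := by
      intro h0
      have heqf : Int.fract (θ * (j:ℝ)) = Int.fract (θ * (i:ℝ)) := by
        rw [← hfi, ← hfj]; linarith [sub_eq_zero.mp h0]
      obtain ⟨m, hm⟩ := fract_diff_int _ _ heqf
      have hmm : θ * ((j:ℝ) - i) = m := by rw [← hm]; ring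
      have hirr : Irrational (θ * ((j:ℝ) - (i:ℝ))) := by
        have hcast2 : ((j:ℝ) - (i:ℝ)) = ((j - i : ℤ) : ℝ) := by push_cast; ring
        rw [hcast2]
        exact hθ.mul_intCast (by omega)
      exact hirr.ne_int m hmm
    rcases lt_or_gt_of_ne hne with hneg | hpos
    · right
      have hgt : -(1:ℝ) < fj - fi := by linarith
      have hfr2 : Int.fract (fj - fi) = fj - fi + 1 := by
        have e1 : Int.fract (fj - fi) = Int.fract ((fj - fi + 1)) := by
          rw [show fj - fi + 1 = fj - fi + ((1:ℤ):ℝ) by push_cast; ring, Int.fract_add_intCast]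
        rw [e1, Int.fract_eq_self.mpr ⟨by linarith, by linarith⟩]
      rw [hfr, hfr2]
      exact ⟨by linarith, by linarith⟩
    · left
      have hfr2 : Int.fract (fj - fi) = fj - fi :=
        Int.fract_eq_self.mpr ⟨by linarith, by linarith⟩
      rw [hfr, hfr2]
      exact ⟨hpos, by linarith⟩
  rcases Nat.lt_or_ge i j with hlt | hge
  · exact main i j hlt heq
  · exact main j i (by omega) heq.symm

open scoped Classical in
lemma orbit (θ : ℝ) (hθ : Irrational θ) {a b : ℝ} (ha : 0 ≤ a) (hab : a < b) (hb : b ≤ 1) :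
    ∃ R : ℕ, ∀ c : ℝ, ∃ s : ℕ, s ≤ R ∧ Int.fract (c + θ * s) ∈ Set.Ioo a b := by
  have hε : 0 < (b - a) / 2 := by linarith
  obtain ⟨p, hp1, hp⟩ := small_step θ hθ hε
  rcases hp with ⟨hδ0, hδε⟩ | ⟨hδ0, hδ1⟩
  · -- increasing case
    set δ := Int.fract (θ * p) with hδ
    obtain ⟨T, hT⟩ := exists_nat_gt (2 / δ)
    refine ⟨p * T, fun c => ?_⟩
    set c₀ := Int.fract c with hc₀
    have hc00 : 0 ≤ c₀ := Int.fract_nonneg _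
    have hc01 : c₀ < 1 := Int.fract_lt_one _
    have hPex : ∃ t : ℕ, a + 1 < c₀ + t * δ := by
      refine ⟨T, ?_⟩
      have : 2 < T * δ := by
        rw [div_lt_iff₀ hδ0] at hT
        linarith
      linarith
    set t₀ := Nat.find hPex with ht₀
    have ht₀P : a + 1 < c₀ + t₀ * δ := Nat.find_spec hPex
    have ht₀T : t₀ ≤ T := Nat.find_min' hPex (by
      have : 2 < T * δ := by rw [div_lt_iff₀ hδ0] at hT; linarith
      linarith)
    have ht₀1 : 1 ≤ t₀ := by
      rcases Nat.eq_zero_or_pos t₀ with h0 | h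
      · exfalso
        rw [h0] at ht₀P
        push_cast at ht₀P
        linarith
      · exact h
    have hmin : ¬(a + 1 < c₀ + ((t₀ - 1 : ℕ) : ℝ) * δ) := Nat.find_min hPex (m := t₀ - 1) (by omega)
    push_neg at hmin
    have hcast : ((t₀ - 1 : ℕ) : ℝ) = (t₀ : ℝ) - 1 := by
      push_cast [Nat.cast_sub ht₀1]; ring
    rw [hcast] at hmin
    have hx1 : c₀ + t₀ * δ ≤ a + 1 + δ := by nlinarith
    have hxin : a + 1 < c₀ + t₀ * δ ∧ c₀ + t₀ * δ < b + 1 := by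
      constructor
      · exact ht₀P
      · have : δ < (b - a) / 2 := hδε
        linarith
    refine ⟨p * t₀, Nat.mul_le_mul_left p ht₀T, ?_⟩
    have key : Int.fract (c + θ * (p * t₀ : ℕ)) = c₀ + t₀ * δ - 1 := by
      have e1 : c + θ * ((p * t₀ : ℕ) : ℝ) = (c₀ + t₀ * δ - 1)
          + ((⌊c⌋ + t₀ * ⌊θ * (p:ℝ)⌋ + 1 : ℤ) : ℝ) := by
        rw [hc₀, hδ]
        simp only [Int.fract]
        push_cast
        ring
      rw [e1, Int.fract_add_intCast, Int.fract_eq_self.mpr ⟨by linarith [hxin.1], by linarith [hxin.2]⟩]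
    rw [key]
    exact ⟨by linarith [hxin.1], by linarith [hxin.2]⟩
  · -- decreasing case
    set δ := Int.fract (θ * p) with hδ
    set δ' := 1 - δ with hδ'
    have hδ'0 : 0 < δ' := by rw [hδ']; linarith
    have hδ'ε : δ' < (b - a) / 2 := by rw [hδ']; linarith
    obtain ⟨T, hT⟩ := exists_nat_gt (2 / δ')
    refine ⟨p * T, fun c => ?_⟩
    set c₀ := Int.fract c with hc₀
    have hc00 : 0 ≤ c₀ := Int.fract_nonneg _
    have hc01 : c₀ < 1 := Int.fract_lt_one _
    have hb0 : 0 < b := by linarith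
    have hPex : ∃ t : ℕ, c₀ - t * δ' < b - 1 := by
      refine ⟨T, ?_⟩
      have : 2 < T * δ' := by rw [div_lt_iff₀ hδ'0] at hT; linarith
      linarith
    set t₀ := Nat.find hPex with ht₀
    have ht₀P : c₀ - t₀ * δ' < b - 1 := Nat.find_spec hPex
    have ht₀T : t₀ ≤ T := Nat.find_min' hPex (by
      have : 2 < T * δ' := by rw [div_lt_iff₀ hδ'0] at hT; linarith
      linarith)
    have ht₀1 : 1 ≤ t₀ := by
      rcases Nat.eq_zero_or_pos t₀ with h0 | h
      · exfalso
        rw [h0] at ht₀P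
        push_cast at ht₀P
        linarith
      · exact h
    have hmin : ¬(c₀ - ((t₀ - 1 : ℕ) : ℝ) * δ' < b - 1) := Nat.find_min hPex (m := t₀ - 1) (by omega)
    push_neg at hmin
    have hcast : ((t₀ - 1 : ℕ) : ℝ) = (t₀ : ℝ) - 1 := by
      push_cast [Nat.cast_sub ht₀1]; ring
    rw [hcast] at hmin
    have hxin : a - 1 < c₀ - t₀ * δ' ∧ c₀ - t₀ * δ' < b - 1 := by
      constructor
      · nlinarith
      · exact ht₀P
    refine ⟨p * t₀, Nat.mul_le_mul_left p ht₀T, ?_⟩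
    have key : Int.fract (c + θ * (p * t₀ : ℕ)) = c₀ - t₀ * δ' + 1 := by
      have e1 : c + θ * ((p * t₀ : ℕ) : ℝ) = (c₀ - t₀ * δ' + 1)
          + ((⌊c⌋ + t₀ * ⌊θ * (p:ℝ)⌋ + t₀ - 1 : ℤ) : ℝ) := by
        rw [hc₀, hδ', hδ]
        simp only [Int.fract]
        push_cast
        ring
      rw [e1, Int.fract_add_intCast,
        Int.fract_eq_self.mpr ⟨by linarith [hxin.1], by linarith [hxin.2]⟩]
    rw [key]
    exact ⟨by linarith [hxin.1], by linarith [hxin.2]⟩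


lemma selection (θ : ℝ) (hθ : Irrational θ) (k Λ : ℕ) (u v : ℕ → ℝ)
    (huv : ∀ j < k, 0 ≤ u j ∧ u j < v j ∧ v j ≤ 1) :
    ∃ R : ℕ, ∀ C : ℕ → ℝ, ∃ L : ℕ → ℕ,
      (∀ i, Λ + 1 ≤ L i ∧ L i ≤ Λ + 1 + R) ∧
      ∀ j < k, Int.fract (C j + θ * (∑ i ∈ Finset.Icc (j+1) k, (L i : ℝ)))
        ∈ Set.Ioo (u j) (v j) := by
  have hRf : ∀ j : ℕ, ∃ R : ℕ, j < k →
      ∀ c : ℝ, ∃ s : ℕ, s ≤ R ∧ Int.fract (c + θ * s) ∈ Set.Ioo (u j) (v j) := by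
    intro j
    by_cases hj : j < k
    · obtain ⟨R, hR⟩ := orbit θ hθ (huv j hj).1 (huv j hj).2.1 (huv j hj).2.2
      exact ⟨R, fun _ => hR⟩
    · exact ⟨0, fun h => absurd h hj⟩
  choose Rf hRf using hRf
  set R := (Finset.range k).sup Rf with hR
  refine ⟨R, fun C => ?_⟩
  have key : ∀ t : ℕ, ∃ L : ℕ → ℕ,
      (∀ i, Λ + 1 ≤ L i ∧ L i ≤ Λ + 1 + R) ∧
      ∀ j < k, k ≤ j + t →
        Int.fract (C j + θ * (∑ i ∈ Finset.Icc (j+1) k, (L i : ℝ)))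
          ∈ Set.Ioo (u j) (v j) := by
    intro t
    induction t with
    | zero =>
      exact ⟨fun _ => Λ + 1, fun i => ⟨le_refl _, Nat.le_add_right _ _⟩, fun j hj hj2 => by omega⟩
    | succ t ih =>
      obtain ⟨L, hLb, hLc⟩ := ih
      by_cases htk : k ≤ t
      · exact ⟨L, hLb, fun j hj _ => hLc j hj (by omega)⟩
      · set j₀ := k - 1 - t with hj₀
        have hj₀k : j₀ < k := by omega
        obtain ⟨s, hs, hfr⟩ := hRf j₀ hj₀k
          (C j₀ + θ * ((Λ + 1 : ℕ) + ∑ i ∈ Finset.Icc (j₀+2) k, (L i : ℝ)))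
        have hsR : s ≤ R := le_trans hs (Finset.le_sup (Finset.mem_range.mpr hj₀k))
        refine ⟨Function.update L (j₀+1) (Λ + 1 + s), ?_, ?_⟩
        · intro i
          rcases eq_or_ne i (j₀+1) with rfl | hne
          · rw [Function.update_self]; omega
          · rw [Function.update_of_ne hne]; exact hLb i
        · intro j hj hjt
          rcases Nat.lt_or_ge j₀ j with hgt | hle
          · have : ∑ i ∈ Finset.Icc (j+1) k, ((Function.update L (j₀+1) (Λ + 1 + s)) i : ℝ)
                = ∑ i ∈ Finset.Icc (j+1) k, (L i : ℝ) := by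
              apply Finset.sum_congr rfl
              intro i hi
              rw [Finset.mem_Icc] at hi
              rw [Function.update_of_ne (by omega)]
            rw [this]
            exact hLc j hj (by omega)
          · have hje : j = j₀ := by omega
            rw [hje]
            have hsplit : Finset.Icc (j₀+1) k = insert (j₀+1) (Finset.Icc (j₀+2) k) := by
              ext x
              simp only [Finset.mem_Icc, Finset.mem_insert]
              omega
            rw [hsplit, Finset.sum_insert (by simp)]
            have hrest : ∑ i ∈ Finset.Icc (j₀+2) k, ((Function.update L (j₀+1) (Λ + 1 + s)) i : ℝ)
                = ∑ i ∈ Finset.Icc (j₀+2) k, (L i : ℝ) := by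
              apply Finset.sum_congr rfl
              intro i hi
              rw [Finset.mem_Icc] at hi
              rw [Function.update_of_ne (by omega)]
            rw [Function.update_self, hrest]
            convert hfr using 2
            push_cast
            ring
  obtain ⟨L, hLb, hLc⟩ := key k
  exact ⟨L, hLb, fun j hj => hLc j hj (by omega)⟩


lemma key {α : ℝ} {q k : ℕ} (hα : Irrational α) (hq : 2 ≤ q) (hk : 1 ≤ k) (u v : ℕ → ℝ)
    (huv : ∀ j < k, 0 ≤ u j ∧ u j < v j ∧ v j ≤ 1) :
    ∃ P : ℕ, ∀ T x y : ℕ, ∃ n m : ℕ, x < q ^ T → y < q ^ T →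
      (n % q ^ T = x ∧ m % q ^ T = y ∧ n < q ^ (T + P) ∧ m < q ^ (T + P) ∧ q ^ T ≤ m ∧
        n + (k - 1) * m < q ^ (T + P) ∧
        ∀ j < k, Int.fract (α * digitSum q (n + j * m)) ∈ Set.Ioo (u j) (v j)) := by
  have hq0 : 0 < q := by omega
  have hq1 : 1 < q := by omega
  -- θ irrational
  set θ : ℝ := ((q : ℝ) - 1) * α with hθdef
  have hθ : Irrational θ := by
    have h1 : ((q : ℝ) - 1) = ((q - 1 : ℕ) : ℝ) := by
      push_cast [Nat.cast_sub (by omega : 1 ≤ q)]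
      ring
    rw [hθdef, h1]
    exact hα.natCast_mul (by omega)
  set Λ : ℕ := 2 * k with hΛdef
  have hΛ : 2 * k < q ^ Λ := by
    calc 2 * k < 2 ^ (2 * k) := Nat.lt_two_pow_self
    _ ≤ q ^ (2 * k) := Nat.pow_le_pow_left (by omega) _
  obtain ⟨R, hsel⟩ := selection θ hθ k Λ u v huv
  set W : ℕ := Λ + R + 2 with hWdef
  refine ⟨(k + 1) * W, ?_⟩
  set P : ℕ := (k + 1) * W with hPdef
  intro T x y
  -- the fixed part of the digit sums
  set c : ℕ → ℕ := fun j => (x + j * y) / q ^ T with hcdef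
  set low : ℕ → ℕ := fun j => (x + j * y) % q ^ T with hlowdef
  set C : ℕ → ℝ := fun j => α * ((digitSum q (low j) : ℝ) + (digitSum q (j + c j) : ℝ)
      + (∑ i ∈ Finset.Icc 1 j, (1 + (digitSum q (j - i) : ℝ)))
      - ∑ i ∈ Finset.Icc (j+1) k, (digitSum q (i - j - 1) : ℝ)) with hCdef
  obtain ⟨L, hLb, hLc⟩ := hsel C
  set z : ℕ → ℕ := fun i => if i = 0 then 0 else q ^ L i - i with hzdef
  set n' : ℕ := ∑ i ∈ Finset.range (k+1), z i * q ^ (i * W) with hn'def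
  set m' : ℕ := ∑ i ∈ Finset.range (k+1), 1 * q ^ (i * W) with hm'def
  refine ⟨x + q ^ T * n', y + q ^ T * m', ?_⟩
  intro hx hy
  set n : ℕ := x + q ^ T * n' with hndef
  set m : ℕ := y + q ^ T * m' with hmdef
  -- basic powers
  have hpowW : q ^ (Λ + R + 1) < q ^ W := Nat.pow_lt_pow_right hq1 (by omega)
  have hkΛ : k < q ^ Λ := by omega
  have hiL : ∀ i, i ≤ k → i < q ^ L i := by
    intro i hik
    calc i ≤ k := hik
    _ < q ^ Λ := hkΛ
    _ ≤ q ^ L i := Nat.pow_le_pow_right (by omega) (by have := (hLb i).1; omega)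
  have hLW : ∀ i, q ^ L i ≤ q ^ (Λ + R + 1) := fun i =>
    Nat.pow_le_pow_right (by omega) (by have := (hLb i).2; omega)
  -- bounds on block values
  have hzlt : ∀ i < k + 1, z i < q ^ W := by
    intro i _
    show (if i = 0 then 0 else q ^ L i - i) < q ^ W
    by_cases h0 : i = 0
    · rw [if_pos h0]
      exact pow_pos hq0 _
    · rw [if_neg h0]
      have := hLW i
      have := pow_pos hq0 (L i)
      omega
  have hone : ∀ i < k + 1, (fun _ : ℕ => 1) i < q ^ W := by
    intro i _
    exact Nat.one_lt_pow (by omega) (by omega)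
  have hn'lt : n' < q ^ P := by
    rw [hn'def, hPdef]
    exact blocks_lt hq W (k+1) z hzlt
  have hm'lt : m' < q ^ P := by
    rw [hm'def, hPdef]
    exact blocks_lt hq W (k+1) (fun _ => 1) hone
  have hm'pos : 1 ≤ m' := by
    rw [hm'def]
    calc 1 = 1 * q ^ (0 * W) := by simp
    _ ≤ ∑ i ∈ Finset.range (k+1), 1 * q ^ (i * W) :=
      Finset.single_le_sum (f := fun i => 1 * q ^ (i * W)) (fun i _ => Nat.zero_le _)
        (Finset.mem_range.mpr (by omega))
  have hpowTP : q ^ (T + P) = q ^ T * q ^ P := pow_add q T P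
  have hqT : 0 < q ^ T := pow_pos hq0 _
  -- c j < k
  have hcj : ∀ j, j < k → c j < k := by
    intro j hj
    rw [hcdef]
    rw [Nat.div_lt_iff_lt_mul hqT]
    have h1 : j * y + j ≤ j * q ^ T := by
      have := Nat.mul_le_mul_left j (show y + 1 ≤ q ^ T from hy)
      simpa [Nat.mul_add] using this
    have h2 : j * q ^ T + q ^ T ≤ k * q ^ T := by
      have := Nat.mul_le_mul_right (q ^ T) (show j + 1 ≤ k from hj)
      simpa [Nat.add_mul] using this
    omega
  -- vertex values
  set Y : ℕ → ℕ → ℕ := fun j i => if i = 0 then j + c j else (q ^ L i - i) + j with hYdef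
  have hYlt : ∀ j, j < k → ∀ i < k + 1, Y j i < q ^ W := by
    intro j hj i _
    show (if i = 0 then j + c j else (q ^ L i - i) + j) < q ^ W
    by_cases h0 : i = 0
    · rw [if_pos h0]
      have := hcj j hj
      have h2k : 2 * k < q ^ W := by
        have : q ^ Λ ≤ q ^ W := Nat.pow_le_pow_right (by omega) (by omega)
        omega
      omega
    · rw [if_neg h0]
      have h1 := hLW i
      have h2 : k < q ^ (Λ + R + 1) := by
        have : q ^ Λ ≤ q ^ (Λ + R + 1) := Nat.pow_le_pow_right (by omega) (by omega)
        omega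
      have h3 : q ^ (Λ + R + 1) + q ^ (Λ + R + 1) ≤ q ^ W := by
        rw [hWdef]
        have e5 : q ^ (Λ + R + 2) = q ^ (Λ + R + 1) * q := pow_succ q (Λ + R + 1)
        have h4 : q ^ (Λ + R + 1) * 2 ≤ q ^ (Λ + R + 1) * q :=
          Nat.mul_le_mul_left _ hq
        omega
      omega
  -- decomposition of n + j m
  have hbig : ∀ j, j < k → n' + j * m' + c j
      = ∑ i ∈ Finset.range (k+1), Y j i * q ^ (i * W) := by
    intro j hj
    have hstep : ∀ i ∈ Finset.range (k+1), Y j i * q ^ (i * W)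
        = (z i + j * 1) * q ^ (i * W) + (if i = 0 then c j else 0) := by
      intro i _
      show (if i = 0 then j + c j else (q ^ L i - i) + j) * q ^ (i * W)
        = ((if i = 0 then 0 else q ^ L i - i) + j * 1) * q ^ (i * W) + (if i = 0 then c j else 0)
      by_cases h0 : i = 0
      · subst h0
        simp
      · simp [h0]
    rw [Finset.sum_congr rfl hstep, Finset.sum_add_distrib]
    have e1 : ∑ i ∈ Finset.range (k+1), (if i = 0 then c j else 0) = c j := by
      rw [Finset.sum_ite_eq' (Finset.range (k+1)) 0 (fun _ => c j)]
      simp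
    have e2 : ∑ i ∈ Finset.range (k+1), (z i + j * 1) * q ^ (i * W)
        = n' + j * m' := by
      rw [hn'def, hm'def, Finset.mul_sum, ← Finset.sum_add_distrib]
      apply Finset.sum_congr rfl
      intro i _
      ring
    rw [e1, e2]
  have hsum : ∀ j, j < k → n + j * m = low j + q ^ T * (n' + j * m' + c j) := by
    intro j hj
    have e0 : n + j * m = (x + j * y) + q ^ T * (n' + j * m') := by
      rw [hndef, hmdef]; ring
    have e1 : x + j * y = low j + q ^ T * c j := by
      rw [hlowdef, hcdef]
      exact (Nat.mod_add_div (x + j * y) (q ^ T)).symm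
    rw [e0, e1]; ring
  have hlowlt : ∀ j, low j < q ^ T := fun j => Nat.mod_lt _ hqT
  -- the real identity
  have hreal : ∀ j, j < k → α * (digitSum q (n + j * m) : ℝ)
      = C j + θ * (∑ i ∈ Finset.Icc (j+1) k, (L i : ℝ)) := by
    intro j hj
    have hds : digitSum q (n + j * m)
        = digitSum q (low j) + ∑ i ∈ Finset.range (k+1), digitSum q (Y j i) := by
      rw [hsum j hj, ds_split hq T _ _ (hlowlt j), hbig j hj,
        ds_blocks hq W (k+1) (Y j) (hYlt j hj)]
    -- split the sum
    have hsplit1 : Finset.range (k+1) = insert 0 (Finset.Icc 1 k) := by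
      ext i; simp only [Finset.mem_range, Finset.mem_insert, Finset.mem_Icc]; omega
    have h0notin : (0:ℕ) ∉ Finset.Icc 1 k := by simp
    have hIccIoc : ∀ a b : ℕ, Finset.Icc (a+1) b = Finset.Ioc a b := by
      intro a b; ext i; simp only [Finset.mem_Icc, Finset.mem_Ioc]; omega
    have hsplit2 : ∀ f : ℕ → ℝ, ∑ i ∈ Finset.Icc 1 k, f i
        = ∑ i ∈ Finset.Icc 1 j, f i + ∑ i ∈ Finset.Icc (j+1) k, f i := by
      intro f
      rw [show (1:ℕ) = 0 + 1 from rfl, hIccIoc 0 k, hIccIoc 0 j, hIccIoc j k]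
      exact (Finset.sum_Ioc_consecutive f (Nat.zero_le j) (le_of_lt hj)).symm
    -- values on the pieces
    have hY0 : Y j 0 = j + c j := by simp [hYdef]
    have hYlow : ∀ i ∈ Finset.Icc 1 j, (digitSum q (Y j i) : ℝ)
        = 1 + (digitSum q (j - i) : ℝ) := by
      intro i hi
      rw [Finset.mem_Icc] at hi
      have hik : i ≤ k := by omega
      have hYi : Y j i = q ^ L i + (j - i) := by
        show (if i = 0 then j + c j else (q ^ L i - i) + j) = q ^ L i + (j - i)
        rw [if_neg (show i ≠ 0 by omega)]
        have := hiL i hik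
        omega
      rw [hYi, ds_pow_add hq (by
        have := hiL i hik
        have : k < q ^ L i := lt_of_le_of_lt (le_refl k) (by
          calc k < q ^ Λ := hkΛ
          _ ≤ q ^ L i := Nat.pow_le_pow_right (by omega) (by have := (hLb i).1; omega))
        omega)]
      push_cast
      ring
    have hYhigh : ∀ i ∈ Finset.Icc (j+1) k, (digitSum q (Y j i) : ℝ)
        = (L i : ℝ) * ((q:ℝ) - 1) - (digitSum q (i - j - 1) : ℝ) := by
      intro i hi
      rw [Finset.mem_Icc] at hi
      have hYi : Y j i = q ^ L i - (i - j) := by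
        show (if i = 0 then j + c j else (q ^ L i - i) + j) = q ^ L i - (i - j)
        rw [if_neg (show i ≠ 0 by omega)]
        have := hiL i hi.2
        omega
      have hid := ds_pow_sub hq (L i) (i - j) (by omega) (by
        have := hiL i hi.2
        omega)
      have hcast := congrArg (fun t : ℕ => (t : ℝ)) hid
      push_cast [Nat.cast_sub (by omega : 1 ≤ q)] at hcast
      have hij1 : i - j - 1 = i - j - 1 := rfl
      rw [hYi]
      have : ((i:ℕ) - j - 1) = i - (j+1) := by omega
      linarith [hcast]
    -- put together
    have e3 : (digitSum q (n + j * m) : ℝ)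
        = (digitSum q (low j) : ℝ) + (digitSum q (j + c j) : ℝ)
          + (∑ i ∈ Finset.Icc 1 j, (1 + (digitSum q (j - i) : ℝ)))
          + (∑ i ∈ Finset.Icc (j+1) k, ((L i : ℝ) * ((q:ℝ) - 1) - (digitSum q (i - j - 1) : ℝ))) := by
      rw [hds]
      push_cast
      rw [hsplit1, Finset.sum_insert h0notin, hsplit2 (fun i => (digitSum q (Y j i) : ℝ)),
        Finset.sum_congr rfl hYlow, Finset.sum_congr rfl hYhigh, hY0]
      push_cast
      ring
    have hCj2 : True := trivial
    have hCj : C j = α * ((digitSum q (low j) : ℝ) + (digitSum q (j + c j) : ℝ)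
        + (∑ i ∈ Finset.Icc 1 j, (1 + (digitSum q (j - i) : ℝ)))
        - ∑ i ∈ Finset.Icc (j+1) k, (digitSum q (i - j - 1) : ℝ)) := by
      simp only [hCdef]
    have e4 : ∑ i ∈ Finset.Icc (j+1) k, ((L i : ℝ) * ((q:ℝ) - 1) - (digitSum q (i - j - 1) : ℝ))
        = ((q:ℝ) - 1) * (∑ i ∈ Finset.Icc (j+1) k, (L i : ℝ))
          - ∑ i ∈ Finset.Icc (j+1) k, (digitSum q (i - j - 1) : ℝ) := by
      rw [Finset.sum_sub_distrib, ← Finset.sum_mul, mul_comm]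
    rw [e3, e4, hCj, hθdef]
    set SL := ∑ i ∈ Finset.Icc (j+1) k, (L i : ℝ) with hSLdef
    set S1 := ∑ i ∈ Finset.Icc 1 j, (1 + (digitSum q (j - i) : ℝ)) with hS1def
    set S2 := ∑ i ∈ Finset.Icc (j+1) k, (digitSum q (i - j - 1) : ℝ) with hS2def
    ring
  -- final conclusions
  refine ⟨?_, ?_, ?_, ?_, ?_, ?_, ?_⟩
  · rw [hndef, Nat.add_mul_mod_self_left, Nat.mod_eq_of_lt hx]
  · rw [hmdef, Nat.add_mul_mod_self_left, Nat.mod_eq_of_lt hy]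
  · rw [hndef, hpowTP]
    have h1 : q ^ T * n' ≤ q ^ T * (q ^ P - 1) := Nat.mul_le_mul_left _ (by omega)
    have h2 : q ^ T * (q ^ P - 1) = q ^ T * q ^ P - q ^ T := by rw [Nat.mul_sub, Nat.mul_one]
    have h3 : q ^ T ≤ q ^ T * q ^ P := Nat.le_mul_of_pos_right _ (pow_pos hq0 _)
    omega
  · rw [hmdef, hpowTP]
    have h1 : q ^ T * m' ≤ q ^ T * (q ^ P - 1) := Nat.mul_le_mul_left _ (by omega)
    have h2 : q ^ T * (q ^ P - 1) = q ^ T * q ^ P - q ^ T := by rw [Nat.mul_sub, Nat.mul_one]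
    have h3 : q ^ T ≤ q ^ T * q ^ P := Nat.le_mul_of_pos_right _ (pow_pos hq0 _)
    omega
  · rw [hmdef]
    have : q ^ T * 1 ≤ q ^ T * m' := Nat.mul_le_mul_left _ hm'pos
    omega
  · have hk1 : k - 1 < k := by omega
    rw [hsum (k-1) hk1, hpowTP]
    have hbiglt : n' + (k-1) * m' + c (k-1) < q ^ P := by
      rw [hbig (k-1) hk1, hPdef]
      exact blocks_lt hq W (k+1) (Y (k-1)) (hYlt (k-1) hk1)
    have h1 : q ^ T * (n' + (k-1) * m' + c (k-1)) ≤ q ^ T * (q ^ P - 1) :=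
      Nat.mul_le_mul_left _ (by omega)
    have h2 : q ^ T * (q ^ P - 1) = q ^ T * q ^ P - q ^ T := by rw [Nat.mul_sub, Nat.mul_one]
    have h3 : q ^ T ≤ q ^ T * q ^ P := Nat.le_mul_of_pos_right _ (pow_pos hq0 _)
    have h4 := hlowlt (k-1)
    omega
  · intro j hj
    rw [show α * (digitSum q (n + j * m) : ℝ)
      = C j + θ * (∑ i ∈ Finset.Icc (j+1) k, (L i : ℝ)) from hreal j hj]
    exact hLc j hj


end Aux

/-- For irrational `α`, the values `α s_q(n+jm) mod 1` hit any
prescribed pattern of subintervals of `[0,1)` along arithmetic progressions of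
length `k`, with positive density of pairs `(n, m)`. -/
theorem stmt4 (α : ℝ) (hα : Irrational α) (q : ℕ) (hq : 2 ≤ q) (k : ℕ) (hk : 1 ≤ k)
    (u v : ℕ → ℝ) (huv : ∀ j < k, 0 ≤ u j ∧ u j < v j ∧ v j ≤ 1) :
    0 < Filter.atTop.liminf (fun N : ℕ =>
      (((Finset.range N ×ˢ Finset.range N).filter fun nm : ℕ × ℕ =>
          1 ≤ nm.2 ∧ nm.1 + (k - 1) * nm.2 < N ∧
          ∀ j < k, Int.fract (α * digitSum q (nm.1 + j * nm.2)) ∈ Set.Ioo (u j) (v j)).card : ℝ)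
        / (N : ℝ) ^ 2) := by
  have hq1 : 1 < q := by omega
  have hq0R : (0:ℝ) < q := by positivity
  obtain ⟨P, hkey⟩ := Aux.key hα hq hk u v huv
  choose fn fm hf using hkey
  set G : ℕ → Finset (ℕ × ℕ) := fun N =>
    (Finset.range N ×ˢ Finset.range N).filter fun nm : ℕ × ℕ =>
      1 ≤ nm.2 ∧ nm.1 + (k - 1) * nm.2 < N ∧
      ∀ j < k, Int.fract (α * digitSum q (nm.1 + j * nm.2)) ∈ Set.Ioo (u j) (v j) with hGdef
  set F : ℕ → ℝ := fun N => ((G N).card : ℝ) / (N : ℝ) ^ 2 with hFdef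
  set δ : ℝ := 1 / (q : ℝ) ^ (2 * P + 2) with hδdef
  have hδ0 : 0 < δ := by rw [hδdef]; positivity
  -- eventual lower bound
  have hev : ∀ N : ℕ, q ^ (P + 1) ≤ N → δ ≤ F N := by
    intro N hN
    have hqP1 : 1 ≤ q ^ (P+1) := Nat.one_le_pow _ _ (by omega)
    have hN0 : 0 < N := by omega
    set D := Nat.log q N with hDdef
    have hDP : P + 1 ≤ D := by
      rw [hDdef, Nat.le_log_iff_pow_le hq1 (by omega)]
      exact hN
    set T := D - P with hTdef
    have hTPD : T + P = D := by omega
    have hqDN : q ^ D ≤ N := Nat.pow_log_le_self q (by omega)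
    have hNlt : N < q ^ (D + 1) := Nat.lt_pow_succ_log_self hq1 N
    -- injection
    have hmaps : ∀ xy ∈ Finset.range (q ^ T) ×ˢ Finset.range (q ^ T),
        (fn T xy.1 xy.2, fm T xy.1 xy.2) ∈ G N := by
      rintro ⟨x, y⟩ hxy
      dsimp only
      rw [Finset.mem_product, Finset.mem_range, Finset.mem_range] at hxy
      obtain ⟨h1, h2, h3, h4, h5, h6, h7⟩ := hf T x y hxy.1 hxy.2
      have hTP : q ^ (T + P) ≤ N := by rw [hTPD]; exact hqDN
      simp only [hGdef, Finset.mem_filter, Finset.mem_product, Finset.mem_range]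
      refine ⟨⟨by omega, by omega⟩, ?_, by omega, h7⟩
      have : 1 ≤ q ^ T := Nat.one_le_pow _ _ (by omega)
      omega
    have hinj : Set.InjOn (fun xy : ℕ × ℕ => (fn T xy.1 xy.2, fm T xy.1 xy.2))
        ↑(Finset.range (q ^ T) ×ˢ Finset.range (q ^ T)) := by
      rintro ⟨x, y⟩ hxy ⟨x', y'⟩ hxy' heq
      simp only [Finset.coe_product, Set.mem_prod, Finset.mem_coe, Finset.mem_range] at hxy hxy'
      obtain ⟨h1, h2, _⟩ := hf T x y hxy.1 hxy.2
      obtain ⟨h1', h2', _⟩ := hf T x' y' hxy'.1 hxy'.2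
      have e1 : fn T x y = fn T x' y' := congrArg Prod.fst heq
      have e2 : fm T x y = fm T x' y' := congrArg Prod.snd heq
      have : x = x' := by rw [← h1, ← h1', e1]
      have : y = y' := by rw [← h2, ← h2', e2]
      ext <;> simp_all
    have hcard : q ^ T * q ^ T ≤ (G N).card := by
      have := Finset.card_le_card_of_injOn _ hmaps hinj
      simpa [Finset.card_product] using this
    -- real estimate
    have hNR : (0:ℝ) < (N:ℝ) ^ 2 := by positivity
    have hNlt' : (N : ℝ) < (q:ℝ) ^ (T + P + 1) := by
      have : N < q ^ (T + P + 1) := by rw [hTPD] at *; omega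
      exact_mod_cast this
    have step1 : δ ≤ ((q:ℝ) ^ T * (q:ℝ) ^ T) / (N:ℝ) ^ 2 := by
      rw [hδdef, div_le_div_iff₀ (by positivity) hNR]
      have e0 : (N:ℝ) ^ 2 ≤ (q:ℝ) ^ (T + P + 1) * (q:ℝ) ^ (T + P + 1) := by
        have hN0' : (0:ℝ) ≤ (N:ℝ) := by positivity
        nlinarith
      calc 1 * (N:ℝ) ^ 2 ≤ (q:ℝ) ^ (T + P + 1) * (q:ℝ) ^ (T + P + 1) := by linarith
      _ = (q:ℝ) ^ T * (q:ℝ) ^ T * (q:ℝ) ^ (2 * P + 2) := by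
          rw [← pow_add, ← pow_add, ← pow_add]; congr 1; ring
    have step2 : ((q:ℝ) ^ T * (q:ℝ) ^ T) / (N:ℝ) ^ 2 ≤ F N := by
      show ((q:ℝ) ^ T * (q:ℝ) ^ T) / (N:ℝ) ^ 2 ≤ ((G N).card : ℝ) / (N : ℝ) ^ 2
      have hcardR : ((q:ℝ) ^ T * (q:ℝ) ^ T) ≤ ((G N).card : ℝ) := by exact_mod_cast hcard
      gcongr
    linarith
  -- boundedness
  have hub : ∀ N : ℕ, F N ≤ 1 := by
    intro N
    rw [hFdef]
    rcases Nat.eq_zero_or_pos N with rfl | hN0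
    · simp
    · have h1 : (G N).card ≤ N * N := by
        calc (G N).card ≤ (Finset.range N ×ˢ Finset.range N).card := by
              rw [hGdef]; exact Finset.card_filter_le _ _
        _ = N * N := by simp [Finset.card_product]
      rw [div_le_one (by positivity)]
      have : ((G N).card : ℝ) ≤ (N:ℝ) * N := by exact_mod_cast h1
      nlinarith
  have hco : Filter.IsCoboundedUnder (· ≥ ·) Filter.atTop F :=
    Filter.IsBoundedUnder.isCoboundedUnder_ge ⟨1, Filter.eventually_map.mpr
      (Filter.Eventually.of_forall hub)⟩
  have hliminf : δ ≤ Filter.atTop.liminf F :=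
    Filter.le_liminf_of_le hco (Filter.eventually_atTop.mpr ⟨q ^ (P+1), hev⟩)
  calc (0:ℝ) < δ := hδ0
  _ ≤ _ := hliminf
end

section
/- Let q ≥ 2 and k ≥ 1 be integers, let Q ≥ 1 be an integer coprime to q−1, and let r_0, …, r_{k−1} ∈ {0,1,…,Q−1}. Then the lower limit, as N → ∞, of (1/N²)·#{ (n,m) ∈ ℕ² : m ≥ 1, n + (k−1)m < N, and s_q(n + jm) ≡ r_j (mod Q) for every 0 ≤ j < k } is strictly positive. In particular such an arithmetic progression n, n+m, …, n+(k−1)m exists. -/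
open Finset Complex

-- ### Auxiliary development ###

lemma digitSum_split {q : ℕ} (hq : 2 ≤ q) {a t : ℕ} (m : ℕ) (ha : a < q ^ t) :
    digitSum q (a + q ^ t * m) = digitSum q a + digitSum q m := by
  rcases Nat.eq_zero_or_pos m with rfl | hm
  · simp [digitSum]
  have hb : 1 < q := hq
  have hlen : (Nat.digits q a).length ≤ t := by
    rcases Nat.eq_zero_or_pos a with rfl | hap
    · simp
    rw [Nat.digits_len q a hb hap.ne']
    have := Nat.log_lt_of_lt_pow hap.ne' ha
    omega
  obtain ⟨d, hd⟩ : ∃ d, t = (Nat.digits q a).length + d := ⟨t - (Nat.digits q a).length, by omega⟩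
  rw [digitSum, hd, ← Nat.digits_append_zeroes_append_digits hb hm]
  simp [digitSum]

lemma digitSum_lt_base {q : ℕ} (hq : 2 ≤ q) {a : ℕ} (ha : a < q) : digitSum q a = a := by
  rcases Nat.eq_zero_or_pos a with rfl | hap
  · simp [digitSum]
  rw [digitSum, Nat.digits_def' hq hap, Nat.mod_eq_of_lt ha, Nat.div_eq_of_lt ha]
  simp

lemma digitSum_one_digit {q : ℕ} (hq : 2 ≤ q) {a b : ℕ} (ha : a < q) :
    digitSum q (a + q * b) = a + digitSum q b := by
  have := digitSum_split hq (t := 1) b (by simpa using ha)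
  simpa [digitSum_lt_base hq ha] using this

lemma digitSum_compl {q : ℕ} (hq : 2 ≤ q) {L y : ℕ} (hy : y < q ^ L) :
    digitSum q (q ^ L - 1 - y) + digitSum q y = L * (q - 1) := by
  induction L generalizing y with
  | zero =>
    have : y = 0 := Nat.lt_one_iff.mp (by simpa using hy)
    subst this; simp [digitSum]
  | succ L ih =>
    have hA : 0 < q ^ L := Nat.pow_pos (by omega)
    set y0 := y % q with hy0
    set y1 := y / q with hy1
    have h0 : y0 < q := Nat.mod_lt _ (by omega)
    have h1 : y1 < q ^ L := by
      rw [hy1]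
      apply Nat.div_lt_of_lt_mul
      calc y < q ^ (L + 1) := hy
        _ = q * q ^ L := by ring
    have hyd : y = y0 + q * y1 := (Nat.mod_add_div y q).symm
    set B := q ^ L - 1 - y1 with hBdef
    have hB : q ^ L = B + y1 + 1 := by omega
    have hQ1 : q ^ (L + 1) = q * B + q * y1 + q := by
      calc q ^ (L + 1) = q ^ L * q := pow_succ q L
        _ = (B + y1 + 1) * q := by rw [← hB]
        _ = q * B + q * y1 + q := by ring
    have key : q ^ (L + 1) - 1 - y = (q - 1 - y0) + q * B := by omega
    rw [key, digitSum_one_digit hq (by omega), hyd, digitSum_one_digit hq h0,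
      Nat.succ_mul]
    have h2 : digitSum q B + digitSum q y1 = L * (q - 1) := ih h1
    omega

section Realize

variable (q k Q : ℕ)

/-- `(u, w)` realizes the residue pattern `α` along progressions of length `k`. -/
def Realizes (α : ℕ → ZMod Q) : Prop :=
  ∃ u w T : ℕ, u + (k - 1) * w < q ^ T ∧ w < q ^ T ∧
    ∀ j < k, ((digitSum q (u + j * w) : ZMod Q)) = α j

variable {q k Q}
variable (hq : 2 ≤ q)

lemma realizes_congr {α β : ℕ → ZMod Q} (h : Realizes q k Q α)
    (hab : ∀ j < k, α j = β j) : Realizes q k Q β := by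
  obtain ⟨u, w, T, h1, h2, h3⟩ := h
  exact ⟨u, w, T, h1, h2, fun j hj => (h3 j hj).trans (hab j hj)⟩

lemma realizes_zero : Realizes q k Q (fun _ => 0) := by
  refine ⟨0, 0, 0, by simp, by simp, fun j hj => by simp [digitSum]⟩

include hq in
lemma realizes_add {α β : ℕ → ZMod Q} (ha : Realizes q k Q α) (hb : Realizes q k Q β) :
    Realizes q k Q (fun j => α j + β j) := by
  obtain ⟨u, w, T, h1, h2, h3⟩ := ha
  obtain ⟨u', w', T', h1', h2', h3'⟩ := hb
  have hpow : q ^ (T + T') = q ^ T * q ^ T' := pow_add q T T'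
  refine ⟨u + q ^ T * u', w + q ^ T * w', T + T', ?_, ?_, ?_⟩
  · have expand : (u + q ^ T * u') + (k - 1) * (w + q ^ T * w')
        = (u + (k - 1) * w) + q ^ T * (u' + (k - 1) * w') := by ring
    have h3' : q ^ T * (u' + (k - 1) * w') + q ^ T ≤ q ^ T * q ^ T' := by
      calc q ^ T * (u' + (k - 1) * w') + q ^ T = q ^ T * (u' + (k - 1) * w' + 1) := by ring
        _ ≤ q ^ T * q ^ T' := Nat.mul_le_mul_left _ (by omega)
    omega
  · have h4 : q ^ T * w' + q ^ T ≤ q ^ T * q ^ T' := by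
      calc q ^ T * w' + q ^ T = q ^ T * (w' + 1) := by ring
        _ ≤ q ^ T * q ^ T' := Nat.mul_le_mul_left _ (by omega)
    omega
  · intro j hj
    have expand : (u + q ^ T * u') + j * (w + q ^ T * w')
        = (u + j * w) + q ^ T * (u' + j * w') := by ring
    have hjw : u + j * w < q ^ T := by
      have : j * w ≤ (k - 1) * w := Nat.mul_le_mul_right _ (by omega)
      omega
    rw [expand, digitSum_split hq _ hjw]
    push_cast
    rw [h3 j hj, h3' j hj]

include hq in
lemma realizes_natmul {α : ℕ → ZMod Q} (ha : Realizes q k Q α) (n : ℕ) :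
    Realizes q k Q (fun j => (n : ZMod Q) * α j) := by
  induction n with
  | zero => exact realizes_congr realizes_zero (by simp)
  | succ n ih =>
    refine realizes_congr (realizes_add hq ih ha) ?_
    intro j hj
    push_cast
    ring

/-- The pattern realized by the single block `u = q^P - t`, `w = 1`. -/
def blockVec (Q t P q : ℕ) (j : ℕ) : ZMod Q :=
  if j < t then ((P * (q - 1) : ℕ) : ZMod Q) - ((digitSum q (t - 1 - j) : ℕ) : ZMod Q)
  else (1 : ZMod Q) + ((digitSum q (j - t) : ℕ) : ZMod Q)

include hq in
lemma realizes_block {t P : ℕ} (ht1 : 1 ≤ t) (htk : t ≤ k) (hP : k ≤ q ^ P) :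
    Realizes q k Q (blockVec Q t P q) := by
  have hq2 : 2 * q ^ P ≤ q ^ (P + 1) := by
    have h := Nat.mul_le_mul_right (q ^ P) hq
    calc 2 * q ^ P ≤ q * q ^ P := h
      _ = q ^ (P + 1) := by ring
  have hb1 : q ^ P - t + (k - 1) * 1 < q ^ (P + 1) := by omega
  have hb2 : (1 : ℕ) < q ^ (P + 1) := by omega
  refine ⟨q ^ P - t, 1, P + 1, hb1, hb2, ?_⟩
  intro j hj
  by_cases hjt : j < t
  · have hy : t - 1 - j < q ^ P := by omega
    have hcompl := digitSum_compl hq hy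
    have harg : q ^ P - t + j * 1 = q ^ P - 1 - (t - 1 - j) := by omega
    rw [harg, blockVec, if_pos hjt]
    have : ((digitSum q (q ^ P - 1 - (t - 1 - j)) + digitSum q (t - 1 - j) : ℕ) : ZMod Q)
        = ((P * (q - 1) : ℕ) : ZMod Q) := by rw [hcompl]
    push_cast at this ⊢
    linear_combination this
  · have harg : q ^ P - t + j * 1 = (j - t) + q ^ P * 1 := by omega
    rw [harg, digitSum_split hq _ (by omega), blockVec, if_neg hjt]
    have h1 : digitSum q 1 = 1 := digitSum_lt_base hq (by omega)
    rw [h1]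
    push_cast
    ring

end Realize

section Realize2

variable {q k Q : ℕ} (hq : 2 ≤ q)

include hq in
lemma realizes_prefix (hQ : 1 ≤ Q) (hcop : Nat.Coprime Q (q - 1)) {t : ℕ}
    (ht1 : 1 ≤ t) (htk : t ≤ k) (δ : ZMod Q) :
    Realizes q k Q (fun j => if j < t then δ else 0) := by
  haveI : NeZero Q := ⟨by omega⟩
  set uu : (ZMod Q)ˣ := ZMod.unitOfCoprime (q - 1) hcop.symm with huu
  set s : ℕ := (((uu⁻¹ : (ZMod Q)ˣ) : ZMod Q) * δ).val with hs
  have hsval : ((s : ℕ) : ZMod Q) = ((uu⁻¹ : (ZMod Q)ˣ) : ZMod Q) * δ :=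
    ZMod.natCast_rightInverse _
  have hcu : ((q - 1 : ℕ) : ZMod Q) = (uu : ZMod Q) :=
    (ZMod.coe_unitOfCoprime _ _).symm
  have hqs : ((q - 1 : ℕ) : ZMod Q) * ((s : ℕ) : ZMod Q) = δ := by
    rw [hsval, hcu, ← mul_assoc, Units.mul_inv, one_mul]
  have hneg : ((Q - 1 : ℕ) : ZMod Q) = -1 := by
    have h1 : ((Q - 1 : ℕ) : ZMod Q) + ((1 : ℕ) : ZMod Q) = ((Q : ℕ) : ZMod Q) := by
      rw [← Nat.cast_add]; congr 1; omega
    have h2 : ((Q : ℕ) : ZMod Q) = 0 := ZMod.natCast_self Q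
    push_cast at h1
    linear_combination h1 + h2
  have hPk : k ≤ q ^ k := (Nat.lt_pow_self (n := k) hq).le
  have hPks : k ≤ q ^ (k + s) :=
    hPk.trans (Nat.pow_le_pow_right (by omega) (by omega))
  have combo := realizes_add hq
    (realizes_natmul hq (realizes_block (Q := Q) hq ht1 htk hPk) (Q - 1))
    (realizes_block (Q := Q) hq ht1 htk hPks)
  refine realizes_congr combo ?_
  intro j hj
  by_cases hjt : j < t
  · simp only [blockVec, if_pos hjt, hneg]
    have e1 : ((k * (q - 1) : ℕ) : ZMod Q) = (k : ZMod Q) * ((q - 1 : ℕ) : ZMod Q) := by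
      push_cast; ring
    have e2 : (((k + s) * (q - 1) : ℕ) : ZMod Q)
        = ((k : ZMod Q) + ((s : ℕ) : ZMod Q)) * ((q - 1 : ℕ) : ZMod Q) := by
      push_cast; ring
    rw [e1, e2]
    linear_combination hqs
  · simp only [blockVec, if_neg hjt, hneg]
    ring

include hq in
lemma realizes_upto (hQ : 1 ≤ Q) (hcop : Nat.Coprime Q (q - 1)) :
    ∀ t, t ≤ k → ∀ α : ℕ → ZMod Q, (∀ j, t ≤ j → α j = 0) → Realizes q k Q α := by
  intro t
  induction t with
  | zero =>
    intro _ α hα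
    exact realizes_congr realizes_zero (fun j _ => (hα j (Nat.zero_le _)).symm)
  | succ t ih =>
    intro htk α hα
    have hβ : Realizes q k Q (fun j => α j - (if j < t + 1 then α t else 0)) := by
      refine ih (by omega) _ (fun j hj => ?_)
      rcases Nat.eq_or_lt_of_le hj with rfl | hlt
      · simp
      · rw [hα j (by omega), if_neg (by omega), sub_zero]
    have combo := realizes_add hq hβ (realizes_prefix hq hQ hcop (by omega) htk (α t))
    refine realizes_congr combo (fun j hj => by ring)

include hq in
lemma realizes_any (hQ : 1 ≤ Q) (hcop : Nat.Coprime Q (q - 1)) (ρ : ℕ → ZMod Q) :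
    Realizes q k Q ρ := by
  have h := realizes_upto hq hQ hcop k le_rfl (fun j => if j < k then ρ j else 0)
    (fun j hj => by exact if_neg (by omega))
  exact realizes_congr h (fun j hj => by exact if_pos hj)

end Realize2

/-- For `Q` coprime to `q - 1`, the residues of `s_q(n+jm)` mod `Q`
hit any prescribed pattern along arithmetic progressions of length `k`, with positive
density of pairs `(n, m)`. -/
theorem stmt5 (q : ℕ) (hq : 2 ≤ q) (k : ℕ) (hk : 1 ≤ k) (Q : ℕ) (hQ : 1 ≤ Q)
    (hcop : Nat.Coprime Q (q - 1)) (r : ℕ → ℕ) (hr : ∀ j < k, r j < Q) :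
    0 < Filter.atTop.liminf (fun N : ℕ =>
      (((Finset.range N ×ˢ Finset.range N).filter fun nm : ℕ × ℕ =>
          1 ≤ nm.2 ∧ nm.1 + (k - 1) * nm.2 < N ∧
          ∀ j < k, digitSum q (nm.1 + j * nm.2) % Q = r j).card : ℝ)
        / (N : ℝ) ^ 2) := by
  haveI : NeZero Q := ⟨by omega⟩
  set f : ℕ → ℝ := fun N =>
      (((Finset.range N ×ˢ Finset.range N).filter fun nm : ℕ × ℕ =>
          1 ≤ nm.2 ∧ nm.1 + (k - 1) * nm.2 < N ∧
          ∀ j < k, digitSum q (nm.1 + j * nm.2) % Q = r j).card : ℝ)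
        / (N : ℝ) ^ 2 with hf
  -- uniform seeds
  have seedEx : ∀ v : Fin k → ZMod Q, ∃ p : ℕ × ℕ × ℕ,
      p.1 + (k - 1) * p.2.1 < q ^ p.2.2 ∧ p.2.1 < q ^ p.2.2 ∧
      ∀ j, (hj : j < k) → ((digitSum q (p.1 + j * p.2.1) : ZMod Q)) = v ⟨j, hj⟩ := by
    intro v
    obtain ⟨u, w, T, h1, h2, h3⟩ := realizes_any hq hQ hcop
      (fun j => if h : j < k then v ⟨j, h⟩ else 0)
    exact ⟨⟨u, w, T⟩, h1, h2, fun j hj => by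
      have h := h3 j hj
      rwa [show (fun j => if h : j < k then v ⟨j, h⟩ else 0) j = v ⟨j, hj⟩ from dif_pos hj] at h⟩
  choose F h1 h2 h3 using seedEx
  set T : ℕ := (Finset.univ : Finset (Fin k → ZMod Q)).sup (fun v => (F v).2.2) with hT
  have hTle : ∀ v, q ^ (F v).2.2 ≤ q ^ T := fun v =>
    Nat.pow_le_pow_right (by omega) (by rw [hT]; exact Finset.le_sup (f := fun v => (F v).2.2) (Finset.mem_univ v))
  have hPk : k ≤ q ^ k := (Nat.lt_pow_self (n := k) hq).le
  set ε : ℝ := 1 / (q : ℝ) ^ (2 * (T + k + 2)) with hε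
  have hεpos : 0 < ε := by positivity
  -- main eventual bound
  have main : ∀ N : ℕ, q ^ (T + k + 1) ≤ N → ε ≤ f N := by
    intro N hN
    have hN0 : N ≠ 0 := by
      have : 0 < q ^ (T + k + 1) := Nat.pow_pos (by omega)
      omega
    set S : ℕ := Nat.log q N with hS
    have hSge : T + k + 1 ≤ S := (Nat.le_log_iff_pow_le (by omega) hN0).mpr hN
    set E' : ℕ := S - (T + k + 1) with hE'
    set E : ℕ := E' + k with hE
    have hES : E + T + 1 = S := by omega
    have hqSN : q ^ S ≤ N := Nat.pow_log_le_self q hN0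
    have hNS : N < q ^ (S + 1) := Nat.lt_pow_succ_log_self (by omega) N
    -- basic power facts
    have pE : q ^ E = q ^ E' * q ^ k := pow_add q E' k
    have pET : q ^ E * q ^ T = q ^ (E + T) := (pow_add q E T).symm
    have pS : q ^ (E + T) * q = q ^ S := by rw [← hES]; ring
    have hq1 : 1 ≤ q ^ T := Nat.one_le_pow _ _ (by omega)
    have hq1E : 1 ≤ q ^ E := Nat.one_le_pow _ _ (by omega)
    have hq1E' : 1 ≤ q ^ E' := Nat.one_le_pow _ _ (by omega)
    have hE'E : q ^ E' ≤ q ^ E := Nat.pow_le_pow_right (by omega) (by omega)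
    -- the map
    set α : ℕ × ℕ → Fin k → ZMod Q := fun bc i =>
      (r i : ZMod Q) - ((digitSum q (bc.1 + (i : ℕ) * (bc.2 + 1)) : ℕ) : ZMod Q) with hα
    set φ : ℕ × ℕ → ℕ × ℕ := fun bc =>
      (bc.1 + q ^ E * (F (α bc)).1, (bc.2 + 1) + q ^ E * (F (α bc)).2.1) with hφ
    set D : Finset (ℕ × ℕ) := Finset.range (q ^ E') ×ˢ Finset.range (q ^ E') with hD
    have hlow : ∀ b c j : ℕ, b < q ^ E' → c < q ^ E' → j < k → b + j * (c + 1) < q ^ E := by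
      intro b c j hb hc hj
      have m1 : j * (c + 1) ≤ (k - 1) * (c + 1) := Nat.mul_le_mul_right _ (by omega)
      have m2 : (k - 1) * (c + 1) ≤ (k - 1) * q ^ E' := Nat.mul_le_mul_left _ (by omega)
      have m3 : (k - 1) * q ^ E' + q ^ E' = k * q ^ E' := by
        have hkk : k - 1 + 1 = k := by omega
        calc (k - 1) * q ^ E' + q ^ E' = (k - 1 + 1) * q ^ E' := by ring
          _ = k * q ^ E' := by rw [hkk]
      have m4 : k * q ^ E' ≤ q ^ k * q ^ E' := Nat.mul_le_mul_right _ hPk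
      have m5 : q ^ E' * q ^ k = q ^ k * q ^ E' := mul_comm _ _
      omega
    have hseedb : ∀ v : Fin k → ZMod Q, (F v).1 + (k - 1) * (F v).2.1 < q ^ T ∧
        (F v).2.1 < q ^ T := fun v => ⟨lt_of_lt_of_le (h1 v) (hTle v), lt_of_lt_of_le (h2 v) (hTle v)⟩
    -- membership
    have hmem : ∀ bc ∈ D, φ bc ∈ ((Finset.range N ×ˢ Finset.range N).filter fun nm : ℕ × ℕ =>
          1 ≤ nm.2 ∧ nm.1 + (k - 1) * nm.2 < N ∧
          ∀ j < k, digitSum q (nm.1 + j * nm.2) % Q = r j) := by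
      rintro ⟨b, c⟩ hbc
      simp only [hD, Finset.mem_product, Finset.mem_range] at hbc
      obtain ⟨hb, hc⟩ := hbc
      obtain ⟨hsb, hsw⟩ := hseedb (α (b, c))
      have hcastall := h3 (α (b, c))
      simp only [Finset.mem_filter, Finset.mem_product, Finset.mem_range, hφ]
      set u : ℕ := (F (α (b, c))).1 with hu
      set w : ℕ := (F (α (b, c))).2.1 with hw
      have hule : u < q ^ T := by omega
      have expand : ∀ j : ℕ, (b + q ^ E * u) + j * ((c + 1) + q ^ E * w)
          = (b + j * (c + 1)) + q ^ E * (u + j * w) := fun j => by ring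
      have key : ∀ j : ℕ, j < k →
          (b + j * (c + 1)) + q ^ E * (u + j * w) < q ^ (E + T) := by
        intro j hj
        have l1 : b + j * (c + 1) < q ^ E := hlow b c j hb hc hj
        have l2 : u + j * w ≤ u + (k - 1) * w := by
          have : j * w ≤ (k - 1) * w := Nat.mul_le_mul_right _ (by omega)
          omega
        have l3 : q ^ E * (u + j * w) + q ^ E ≤ q ^ E * q ^ T := by
          calc q ^ E * (u + j * w) + q ^ E = q ^ E * (u + j * w + 1) := by ring
            _ ≤ q ^ E * q ^ T := Nat.mul_le_mul_left _ (by omega)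
        omega
      have hkey : (b + q ^ E * u) + (k - 1) * ((c + 1) + q ^ E * w) < N := by
        have := key (k - 1) (by omega)
        have hlt : q ^ (E + T) < q ^ S := by
          have : 2 * q ^ (E + T) ≤ q ^ (E + T) * q := by
            calc 2 * q ^ (E + T) = q ^ (E + T) * 2 := by ring
              _ ≤ q ^ (E + T) * q := Nat.mul_le_mul_left _ hq
          omega
        rw [expand (k - 1)]
        omega
      refine ⟨⟨?_, ?_⟩, by omega, hkey, ?_⟩
      · -- n < N
        have := hkey
        have h2' : (b + q ^ E * u) ≤ (b + q ^ E * u) + (k - 1) * ((c + 1) + q ^ E * w) :=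
          Nat.le_add_right _ _
        omega
      · -- m < N
        have l3 : q ^ E * w + q ^ E ≤ q ^ E * q ^ T := by
          calc q ^ E * w + q ^ E = q ^ E * (w + 1) := by ring
            _ ≤ q ^ E * q ^ T := Nat.mul_le_mul_left _ (by omega)
        have hlt : q ^ (E + T) < q ^ S := by
          have : 2 * q ^ (E + T) ≤ q ^ (E + T) * q := by
            calc 2 * q ^ (E + T) = q ^ (E + T) * 2 := by ring
              _ ≤ q ^ (E + T) * q := Nat.mul_le_mul_left _ hq
          omega
        omega
      · -- digit sums
        intro j hj
        rw [expand j, digitSum_split hq _ (hlow b c j hb hc hj)]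
        have hcast := hcastall j hj
        have : ((digitSum q (b + j * (c + 1)) + digitSum q (u + j * w) : ℕ) : ZMod Q)
            = ((r j : ℕ) : ZMod Q) := by
          push_cast
          rw [show ((digitSum q (u + j * w) : ℕ) : ZMod Q) = α (b, c) ⟨j, hj⟩ from hcast]
          simp only [hα]
          ring
        have hm := (ZMod.natCast_eq_natCast_iff' _ _ _).mp this
        rwa [Nat.mod_eq_of_lt (hr j hj)] at hm
    -- injectivity
    have hinj : Set.InjOn φ D := by
      rintro ⟨b, c⟩ hbc ⟨b', c'⟩ hbc' heq
      simp only [hD, Finset.coe_product, Set.mem_prod, Finset.mem_coe, Finset.mem_range] at hbc hbc'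
      simp only [hφ, Prod.mk.injEq] at heq
      obtain ⟨e1, e2⟩ := heq
      have hb : b < q ^ E := lt_of_lt_of_le hbc.1 hE'E
      have hb' : b' < q ^ E := lt_of_lt_of_le hbc'.1 hE'E
      have hc : c + 1 < q ^ E := by
        have : q ^ E' < q ^ E := by
          have : k ≥ 1 := hk
          exact Nat.pow_lt_pow_right (by omega) (by omega)
        omega
      have hc' : c' + 1 < q ^ E := by
        have : q ^ E' < q ^ E := Nat.pow_lt_pow_right (by omega) (by omega)
        omega
      have f1 : b = b' := by
        have := congrArg (· % q ^ E) e1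
        simpa [Nat.add_mul_mod_self_left, Nat.mod_eq_of_lt hb, Nat.mod_eq_of_lt hb'] using this
      have f2 : c = c' := by
        have := congrArg (· % q ^ E) e2
        simpa [Nat.add_mul_mod_self_left, Nat.mod_eq_of_lt hc, Nat.mod_eq_of_lt hc'] using this
      simp [f1, f2]
    have hcard : q ^ E' * q ^ E' ≤ ((Finset.range N ×ˢ Finset.range N).filter fun nm : ℕ × ℕ =>
          1 ≤ nm.2 ∧ nm.1 + (k - 1) * nm.2 < N ∧
          ∀ j < k, digitSum q (nm.1 + j * nm.2) % Q = r j).card := by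
      have := Finset.card_le_card_of_injOn φ hmem hinj
      simpa [hD] using this
    -- real arithmetic
    have hN2 : (0 : ℝ) < (N : ℝ) ^ 2 := by
      have : 0 < N := Nat.pos_of_ne_zero hN0
      positivity
    rw [hf]
    rw [le_div_iff₀ hN2]
    have hNr : (N : ℝ) ≤ (q : ℝ) ^ (S + 1) := by
      have := hNS
      exact_mod_cast this.le
    have hNn : (0 : ℝ) ≤ (N : ℝ) := Nat.cast_nonneg N
    have step1 : ε * (N : ℝ) ^ 2 ≤ ε * ((q : ℝ) ^ (S + 1)) ^ 2 := by
      apply mul_le_mul_of_nonneg_left _ hεpos.le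
      exact pow_le_pow_left₀ hNn hNr 2
    have step2 : ε * ((q : ℝ) ^ (S + 1)) ^ 2 = (q : ℝ) ^ (2 * E') := by
      rw [hε]
      have hqr : (0 : ℝ) < (q : ℝ) := by positivity
      have hexp : (S + 1) * 2 = 2 * E' + 2 * (T + k + 2) := by omega
      rw [← pow_mul, hexp, pow_add]
      field_simp
    have step3 : ((q : ℝ) ^ (2 * E')) ≤ (((Finset.range N ×ˢ Finset.range N).filter fun nm : ℕ × ℕ =>
          1 ≤ nm.2 ∧ nm.1 + (k - 1) * nm.2 < N ∧
          ∀ j < k, digitSum q (nm.1 + j * nm.2) % Q = r j).card : ℝ) := by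
      have : (q : ℝ) ^ (2 * E') = ((q ^ E' * q ^ E' : ℕ) : ℝ) := by
        push_cast
        ring
      rw [this]
      exact_mod_cast hcard
    calc ε * (N : ℝ) ^ 2 ≤ (q : ℝ) ^ (2 * E') := by rw [← step2]; exact step1
      _ ≤ _ := step3
  -- conclude liminf
  have hub : ∀ᶠ N in Filter.atTop, f N ≤ 1 := by
    filter_upwards [Filter.eventually_ge_atTop 1] with N hN
    rw [hf]
    have hN2 : (0 : ℝ) < (N : ℝ) ^ 2 := by positivity
    rw [div_le_one hN2]
    have : ((Finset.range N ×ˢ Finset.range N).filter fun nm : ℕ × ℕ =>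
          1 ≤ nm.2 ∧ nm.1 + (k - 1) * nm.2 < N ∧
          ∀ j < k, digitSum q (nm.1 + j * nm.2) % Q = r j).card ≤ N * N := by
      calc _ ≤ (Finset.range N ×ˢ Finset.range N).card := Finset.card_filter_le _ _
        _ = N * N := by simp
    calc (((Finset.range N ×ˢ Finset.range N).filter fun nm : ℕ × ℕ =>
          1 ≤ nm.2 ∧ nm.1 + (k - 1) * nm.2 < N ∧
          ∀ j < k, digitSum q (nm.1 + j * nm.2) % Q = r j).card : ℝ) ≤ ((N * N : ℕ) : ℝ) := by
          exact_mod_cast this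
      _ = (N : ℝ) ^ 2 := by push_cast; ring
  have hev : ∀ᶠ N in Filter.atTop, ε ≤ f N :=
    Filter.eventually_atTop.2 ⟨q ^ (T + k + 1), main⟩
  have hcb : Filter.atTop.IsCoboundedUnder (· ≥ ·) f :=
    Filter.isCoboundedUnder_ge_of_eventually_le _ hub
  exact lt_of_lt_of_le hεpos (Filter.le_liminf_of_le hcb hev)
end

section
/- Let q ≥ 2 be an integer and let f : ℕ → ℂ be a q-multiplicative sequence with |f(n)| = 1 for all n. Suppose that for every α ∈ ℝ, (1/N)·∑_{n=0}^{N−1} f(n) e(nα) → 0 as N → ∞. Then the convergence is uniform in α, i.e. sup_{α ∈ ℝ} |(1/N)·∑_{n=0}^{N−1} f(n) e(nα)| → 0 as N → ∞. -/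
open Finset Complex

section Aux

open Filter

noncomputable def S (f : ℕ → ℂ) (N : ℕ) (α : ℝ) : ℂ := ∑ n ∈ Finset.range N, f n * e (n * α)

lemma e_add (x y : ℝ) : e (x + y) = e x * e y := by
  simp only [e, Complex.ofReal_add, mul_add, Complex.exp_add]

lemma abs_e (x : ℝ) : ‖e x‖ = 1 := by
  simp [e, Complex.norm_exp, Complex.mul_re, Complex.mul_im]

lemma e_int (k : ℤ) : e k = 1 := by
  have h : (2 * (Real.pi:ℂ) * Complex.I * ((k:ℝ):ℂ)) = (k:ℂ) * (2 * Real.pi * Complex.I) := by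
    push_cast; ring
  rw [e, h, Complex.exp_int_mul_two_pi_mul_I]

lemma e_zero : e 0 = 1 := by simp [e]

variable {q : ℕ} {f : ℕ → ℂ}

lemma f_zero (hf : QMult q f) (hmod : ∀ n, ‖f n‖ = 1) : f 0 = 1 := by
  have h := hf 0 0 0 (by norm_num) (by simp)
  have h0 : f 0 ≠ 0 := by
    intro h'
    have := hmod 0
    rw [h'] at this
    simp at this
  have h' : f 0 * 1 = f 0 * f 0 := by rw [mul_one]; simpa using h
  exact (mul_left_cancel₀ h0 h').symm

lemma S_abs_le (hmod : ∀ n, ‖f n‖ = 1) (N : ℕ) (α : ℝ) :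
    ‖S f N α‖ ≤ N := by
  calc ‖S f N α‖ ≤ ∑ n ∈ Finset.range N, ‖f n * e (n * α)‖ :=
        norm_sum_le _ _
    _ = N := by
        simp only [norm_mul, hmod, abs_e, one_mul]
        simp

lemma S_split (f : ℕ → ℂ) (a b : ℕ) (α : ℝ) :
    S f (a + b) α = S f a α + ∑ m ∈ Finset.range b, f (a + m) * e ((a + m : ℕ) * α) := by
  have h : Finset.range (a + b) = Finset.Ico 0 (a + b) := Finset.range_eq_Ico _
  have h2 : Finset.Ico 0 a = Finset.range a := (Finset.range_eq_Ico _).symm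
  rw [S, S, h, ← Finset.sum_Ico_consecutive _ (Nat.zero_le a) (Nat.le_add_right a b),
    Finset.sum_Ico_eq_sum_range, Finset.sum_Ico_eq_sum_range, Nat.add_sub_cancel_left]
  simp

lemma block (hf : QMult q f) (t c : ℕ) (hc : q ^ t ∣ c) (r : ℕ) (hr : r ≤ q ^ t) (α : ℝ) :
    ∑ m ∈ Finset.range r, f (c + m) * e ((c + m : ℕ) * α) = f c * e ((c : ℕ) * α) * S f r α := by
  rw [S, Finset.mul_sum]
  refine Finset.sum_congr rfl fun m hm => ?_
  have hm' : m < q ^ t := lt_of_lt_of_le (Finset.mem_range.mp hm) hr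
  have hfm : f (c + m) = f m * f c := by rw [add_comm]; exact hf t m c hm' hc
  have harg : ((c + m : ℕ) : ℝ) * α = (c : ℝ) * α + (m : ℝ) * α := by push_cast; ring
  rw [hfm, harg, e_add]
  ring

lemma S_mul_pow (hf : QMult q f) (hmod : ∀ n, ‖f n‖ = 1) (a t : ℕ) (α : ℝ) :
    ‖S f (a * q ^ t) α‖ ≤ a * ‖S f (q ^ t) α‖ := by
  induction a with
  | zero => simp [S]
  | succ a ih =>
    have h1 : (a + 1) * q ^ t = a * q ^ t + q ^ t := by ring
    rw [h1, S_split, block hf t (a * q ^ t) (dvd_mul_left _ _) (q ^ t) le_rfl α]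
    calc ‖S f (a * q ^ t) α + f (a * q ^ t) * e ((a * q ^ t : ℕ) * α) * S f (q ^ t) α‖
        ≤ ‖S f (a * q ^ t) α‖
          + ‖f (a * q ^ t) * e ((a * q ^ t : ℕ) * α) * S f (q ^ t) α‖ := norm_add_le _ _
      _ ≤ a * ‖S f (q ^ t) α‖ + 1 * 1 * ‖S f (q ^ t) α‖ := by
          rw [norm_mul, norm_mul, hmod, abs_e]
          exact add_le_add ih le_rfl
      _ = (a + 1 : ℕ) * ‖S f (q ^ t) α‖ := by push_cast; ring

lemma S_one (hf : QMult q f) (hmod : ∀ n, ‖f n‖ = 1) (α : ℝ) : S f 1 α = 1 := by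
  rw [S]
  simp [f_zero hf hmod, e_zero]

lemma key (hq : 2 ≤ q) (hf : QMult q f) (hmod : ∀ n, ‖f n‖ = 1) :
    ∀ t N, N < q ^ (t + 1) → ∀ α : ℝ,
      ‖S f N α‖ ≤ ((q : ℝ) - 1) * ∑ j ∈ Finset.range (t + 1), ‖S f (q ^ j) α‖ := by
  intro t
  induction t with
  | zero =>
    intro N hN α
    have h1 : ‖S f N α‖ ≤ N := S_abs_le hmod N α
    have h2 : S f (q ^ 0) α = 1 := by rw [pow_zero]; exact S_one hf hmod α
    rw [Finset.sum_range_one, h2, norm_one, mul_one]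
    have h3 : (N : ℝ) ≤ (q : ℝ) - 1 := by
      have : N + 1 ≤ q := by
        have := hN
        rw [pow_one] at this
        omega
      have := Nat.cast_le (α := ℝ) |>.mpr this
      push_cast at this
      linarith
    linarith
  | succ t ih =>
    intro N hN α
    by_cases h : N < q ^ (t + 1)
    · calc ‖S f N α‖ ≤ ((q : ℝ) - 1) * ∑ j ∈ Finset.range (t + 1), ‖S f (q ^ j) α‖ := ih N h α
        _ ≤ ((q : ℝ) - 1) * ∑ j ∈ Finset.range (t + 2), ‖S f (q ^ j) α‖ := by
            have hq1 : (1 : ℝ) ≤ q := by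
              have : (2 : ℝ) ≤ q := by exact_mod_cast hq
              linarith
            apply mul_le_mul_of_nonneg_left _ (by linarith)
            apply Finset.sum_le_sum_of_subset_of_nonneg
            · exact Finset.range_subset_range.mpr (by omega)
            · intro i _ _; positivity
    · set a := N / q ^ (t + 1) with ha
      set r := N % q ^ (t + 1) with hrdef
      have hqpos : 0 < q ^ (t + 1) := pow_pos (by omega) _
      have hN' : q ^ (t + 1) * a + r = N := Nat.div_add_mod N (q ^ (t + 1))
      have ha_lt : a < q := by
        rw [ha, Nat.div_lt_iff_lt_mul hqpos]
        calc N < q ^ (t + 2) := hN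
          _ = q * q ^ (t + 1) := by ring
      have hr : r < q ^ (t + 1) := Nat.mod_lt _ hqpos
      have hsplit : ‖S f N α‖
          ≤ ‖S f (q ^ (t + 1) * a) α‖ + ‖S f r α‖ := by
        rw [← hN', S_split,
          block hf (t + 1) (q ^ (t + 1) * a) (dvd_mul_right _ _) r (le_of_lt hr) α]
        calc ‖S f (q ^ (t + 1) * a) α + f (q ^ (t + 1) * a) * e ((q ^ (t + 1) * a : ℕ) * α) * S f r α‖
            ≤ ‖S f (q ^ (t + 1) * a) α‖
              + ‖f (q ^ (t + 1) * a) * e ((q ^ (t + 1) * a : ℕ) * α) * S f r α‖ := norm_add_le _ _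
          _ = ‖S f (q ^ (t + 1) * a) α‖ + ‖S f r α‖ := by
              rw [norm_mul, norm_mul, hmod, abs_e, one_mul, one_mul]
      have hfirst : ‖S f (q ^ (t + 1) * a) α‖ ≤ a * ‖S f (q ^ (t + 1)) α‖ := by
        rw [mul_comm (q ^ (t + 1)) a]
        exact S_mul_pow hf hmod a (t + 1) α
      have hsecond := ih r hr α
      have ha_le : (a : ℝ) ≤ (q : ℝ) - 1 := by
        have : a + 1 ≤ q := ha_lt
        have := Nat.cast_le (α := ℝ) |>.mpr this
        push_cast at this
        linarith
      have habs_nonneg : (0 : ℝ) ≤ ‖S f (q ^ (t + 1)) α‖ := norm_nonneg _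
      calc ‖S f N α‖
          ≤ ‖S f (q ^ (t + 1) * a) α‖ + ‖S f r α‖ := hsplit
        _ ≤ a * ‖S f (q ^ (t + 1)) α‖
            + ((q : ℝ) - 1) * ∑ j ∈ Finset.range (t + 1), ‖S f (q ^ j) α‖ :=
            add_le_add hfirst hsecond
        _ ≤ ((q : ℝ) - 1) * ‖S f (q ^ (t + 1)) α‖
            + ((q : ℝ) - 1) * ∑ j ∈ Finset.range (t + 1), ‖S f (q ^ j) α‖ := by
            have := mul_le_mul_of_nonneg_right ha_le habs_nonneg
            linarith
        _ = ((q : ℝ) - 1) * ∑ j ∈ Finset.range (t + 2), ‖S f (q ^ j) α‖ := by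
            rw [Finset.sum_range_succ (fun j => ‖S f (q ^ j) α‖) (t + 1)]
            ring

lemma S_fract (f : ℕ → ℂ) (N : ℕ) (α : ℝ) : S f N (Int.fract α) = S f N α := by
  rw [S, S]
  refine Finset.sum_congr rfl fun n _ => ?_
  congr 1
  have h : (n : ℝ) * α = (n : ℝ) * Int.fract α + ((n * ⌊α⌋ : ℤ) : ℝ) := by
    rw [Int.fract]
    push_cast
    ring
  rw [h, e_add, e_int, mul_one]

lemma S_cont (f : ℕ → ℂ) (N : ℕ) : Continuous fun α : ℝ => S f N α := by
  apply continuous_finset_sum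
  intro n _
  apply Continuous.mul continuous_const
  unfold e
  apply Complex.continuous_exp.comp
  apply Continuous.mul continuous_const
  exact Complex.continuous_ofReal.comp (continuous_const.mul continuous_id)

lemma S_pow_anti (hq : 2 ≤ q) (hf : QMult q f) (hmod : ∀ n, ‖f n‖ = 1)
    (α : ℝ) {t t' : ℕ} (h : t ≤ t') :
    ‖S f (q ^ t') α‖ / (q : ℝ) ^ t' ≤ ‖S f (q ^ t) α‖ / (q : ℝ) ^ t := by
  induction t', h using Nat.le_induction with
  | base => exact le_refl _
  | succ m hm ih =>
    refine le_trans ?_ ih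
    have hstep : ‖S f (q ^ (m + 1)) α‖ ≤ (q : ℝ) * ‖S f (q ^ m) α‖ := by
      have h1 : q ^ (m + 1) = q * q ^ m := by ring
      rw [h1]
      exact S_mul_pow hf hmod q m α
    have hqpos : (0 : ℝ) < (q : ℝ) ^ m := by positivity
    have hqpos' : (0 : ℝ) < (q : ℝ) := by positivity
    rw [pow_succ]
    rw [div_le_div_iff₀ (by positivity) hqpos]
    calc ‖S f (q ^ (m + 1)) α‖ * (q : ℝ) ^ m
        ≤ ((q : ℝ) * ‖S f (q ^ m) α‖) * (q : ℝ) ^ m :=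
          mul_le_mul_of_nonneg_right hstep (le_of_lt hqpos)
      _ = ‖S f (q ^ m) α‖ * ((q : ℝ) ^ m * (q : ℝ)) := by ring

lemma geom_le' (hq : 2 ≤ q) : ∀ n : ℕ, ∑ j ∈ Finset.range n, (q : ℝ) ^ j ≤ (q : ℝ) ^ n := by
  have hq2 : (2 : ℝ) ≤ (q : ℝ) := by exact_mod_cast hq
  intro n
  induction n with
  | zero => simp
  | succ n ih =>
    rw [Finset.sum_range_succ, pow_succ]
    have h1 : (0 : ℝ) ≤ (q : ℝ) ^ n := by positivity
    nlinarith

end Aux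

/-- If the Fourier averages of a `q`-multiplicative sequence tend to
zero for each fixed frequency `α`, then they tend to zero uniformly in `α`. -/
theorem stmt9 (q : ℕ) (hq : 2 ≤ q) (f : ℕ → ℂ) (hf : QMult q f)
    (hmod : ∀ n, ‖f n‖ = 1)
    (hosc : ∀ α : ℝ, Filter.Tendsto
      (fun N : ℕ => (∑ n ∈ Finset.range N, f n * e (n * α)) / N) Filter.atTop (nhds 0)) :
    Filter.Tendsto
      (fun N : ℕ => ⨆ α : ℝ,
        ‖(∑ n ∈ Finset.range N, f n * e (n * α)) / N‖)
      Filter.atTop (nhds 0) := by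
  have hq1 : 1 < q := by omega
  have hq2 : (2 : ℝ) ≤ (q : ℝ) := by exact_mod_cast hq
  have habslem : ∀ (N : ℕ) (α : ℝ),
      ‖(∑ n ∈ Finset.range N, f n * e (n * α)) / N‖
        = ‖S f N α‖ / N := by
    intro N α
    rw [norm_div, Complex.norm_natCast]
    rfl
  have hg_nonneg : ∀ (N : ℕ) (α : ℝ), 0 ≤ ‖S f N α‖ / N := by
    intro N α; positivity
  have hg_le_one : ∀ (N : ℕ) (α : ℝ), ‖S f N α‖ / N ≤ 1 := by
    intro N α
    rcases Nat.eq_zero_or_pos N with h | h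
    · subst h; simp [S]
    · have h1 : ‖S f N α‖ ≤ N := S_abs_le hmod N α
      have hN : (0 : ℝ) < N := by exact_mod_cast h
      rw [div_le_one hN]
      exact h1
  have hbdd : ∀ N : ℕ, BddAbove (Set.range fun α : ℝ => ‖S f N α‖ / N) := by
    intro N
    exact ⟨1, by rintro x ⟨α, rfl⟩; exact hg_le_one N α⟩
  set M : ℕ → ℝ := fun t => ⨆ α : ℝ, ‖S f (q ^ t) α‖ / ((q ^ t : ℕ) : ℝ) with hMdef
  have hM_nonneg : ∀ t, 0 ≤ M t := fun t => Real.iSup_nonneg fun α => hg_nonneg _ _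
  have hM_le_one : ∀ t, M t ≤ 1 := fun t => ciSup_le fun α => hg_le_one _ _
  have hg_anti : ∀ (α : ℝ) {t t' : ℕ}, t ≤ t' →
      ‖S f (q ^ t') α‖ / ((q ^ t' : ℕ) : ℝ)
        ≤ ‖S f (q ^ t) α‖ / ((q ^ t : ℕ) : ℝ) := by
    intro α t t' h
    have h2 := S_pow_anti hq hf hmod α h
    simpa [Nat.cast_pow] using h2
  -- Step 1: M tends to 0.
  have hMtend : Filter.Tendsto M Filter.atTop (nhds 0) := by
    by_contra hcon
    rw [Metric.tendsto_atTop] at hcon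
    push_neg at hcon
    obtain ⟨ε, hε, hfreq⟩ := hcon
    choose T hT hTe using hfreq
    have hMT : ∀ k, ε ≤ M (T k) := by
      intro k
      have h3 := hTe k
      rw [Real.dist_eq, sub_zero] at h3
      calc ε ≤ |M (T k)| := h3
        _ = M (T k) := abs_of_nonneg (hM_nonneg _)
    have hex : ∀ k, ∃ α : ℝ, ε / 2 < ‖S f (q ^ T k) α‖ / ((q ^ T k : ℕ) : ℝ) := by
      intro k
      apply exists_lt_of_lt_ciSup
      calc ε / 2 < ε := by linarith
        _ ≤ M (T k) := hMT k
    choose β hβ using hex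
    have hmem : ∀ k, Int.fract (β k) ∈ Set.Icc (0 : ℝ) 1 :=
      fun k => ⟨Int.fract_nonneg _, le_of_lt (Int.fract_lt_one _)⟩
    obtain ⟨α₀, hα₀mem, φ, hφ, hconv⟩ := (isCompact_Icc).tendsto_subseq hmem
    have hlow : ∀ t, ε / 2 ≤ ‖S f (q ^ t) α₀‖ / ((q ^ t : ℕ) : ℝ) := by
      intro t
      have hcg : Continuous fun α : ℝ => ‖S f (q ^ t) α‖ / ((q ^ t : ℕ) : ℝ) :=
        (continuous_norm.comp (S_cont f _)).div_const _
      have hc : Filter.Tendsto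
          (fun i => ‖S f (q ^ t) (Int.fract (β (φ i)))‖ / ((q ^ t : ℕ) : ℝ))
          Filter.atTop (nhds (‖S f (q ^ t) α₀‖ / ((q ^ t : ℕ) : ℝ))) :=
        (hcg.tendsto α₀).comp hconv
      apply ge_of_tendsto hc
      filter_upwards [Filter.eventually_ge_atTop t] with i hi
      have h1 : t ≤ T (φ i) := le_trans hi (le_trans hφ.le_apply (hT (φ i)))
      have h2 : ‖S f (q ^ T (φ i)) (β (φ i))‖ / ((q ^ T (φ i) : ℕ) : ℝ)
          ≤ ‖S f (q ^ t) (Int.fract (β (φ i)))‖ / ((q ^ t : ℕ) : ℝ) := by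
        calc ‖S f (q ^ T (φ i)) (β (φ i))‖ / ((q ^ T (φ i) : ℕ) : ℝ)
            = ‖S f (q ^ T (φ i)) (Int.fract (β (φ i)))‖ / ((q ^ T (φ i) : ℕ) : ℝ) := by
              rw [S_fract]
          _ ≤ ‖S f (q ^ t) (Int.fract (β (φ i)))‖ / ((q ^ t : ℕ) : ℝ) := hg_anti _ h1
      exact le_of_lt (lt_of_lt_of_le (hβ (φ i)) h2)
    have hpow : Filter.Tendsto (fun t : ℕ => q ^ t) Filter.atTop Filter.atTop :=
      tendsto_pow_atTop_atTop_of_one_lt hq1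
    have h3 := (hosc α₀).comp hpow
    have h4 := (continuous_norm.tendsto 0).comp h3
    rw [norm_zero] at h4
    have h5 : Filter.Tendsto
        (fun t : ℕ => ‖S f (q ^ t) α₀‖ / ((q ^ t : ℕ) : ℝ))
        Filter.atTop (nhds 0) := by
      have heq : (fun t : ℕ => ‖S f (q ^ t) α₀‖ / ((q ^ t : ℕ) : ℝ))
          = fun t : ℕ =>
            ‖(∑ n ∈ Finset.range (q ^ t), f n * e (n * α₀)) / ((q ^ t : ℕ) : ℂ)‖ := by
        funext t
        rw [habslem]
      rw [heq]
      exact h4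
    have h6 := ge_of_tendsto h5 (Filter.Eventually.of_forall hlow)
    linarith
  -- Step 2: uniform convergence.
  rw [Metric.tendsto_atTop]
  intro ε hε
  have hε' : 0 < ε / (2 * (q : ℝ) ^ 2) := by positivity
  set ε' : ℝ := ε / (2 * (q : ℝ) ^ 2) with hε'def
  obtain ⟨J, hJ⟩ := Metric.tendsto_atTop.mp hMtend ε' hε'
  have hMJ : ∀ j, J ≤ j → M j ≤ ε' := by
    intro j hj
    have h3 := hJ j hj
    rw [Real.dist_eq, sub_zero] at h3
    exact le_of_lt (lt_of_abs_lt h3)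
  set C : ℝ := ((q : ℝ) - 1) * ((J : ℝ) * (q : ℝ) ^ J) with hCdef
  have hC0 : 0 ≤ C := by
    apply mul_nonneg (by linarith)
    positivity
  obtain ⟨N₁, hN₁⟩ := exists_nat_gt (2 * C / ε)
  refine ⟨max N₁ 1, fun N hN => ?_⟩
  have hN1 : 1 ≤ N := le_trans (le_max_right _ _) hN
  have hNN₁ : (N₁ : ℝ) ≤ (N : ℝ) := by exact_mod_cast le_trans (le_max_left _ _) hN
  have hNpos : (0 : ℝ) < N := by exact_mod_cast hN1
  set t := Nat.log q N with ht
  have hlogle : (q : ℝ) ^ t ≤ N := by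
    exact_mod_cast Nat.pow_log_le_self q (by omega)
  have hloglt : N < q ^ (t + 1) := Nat.lt_pow_succ_log_self hq1 N
  -- sum bound
  have hsum : ∑ j ∈ Finset.range (t + 1), M j * (q : ℝ) ^ j
      ≤ (J : ℝ) * (q : ℝ) ^ J + ε' * (q : ℝ) ^ (t + 1) := by
    have hterm : ∀ j ∈ Finset.range (t + 1),
        M j * (q : ℝ) ^ j ≤ (if j < J then (q : ℝ) ^ J else 0) + ε' * (q : ℝ) ^ j := by
      intro j _
      have hpj : (0 : ℝ) ≤ (q : ℝ) ^ j := by positivity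
      by_cases hj : j < J
      · rw [if_pos hj]
        have h1 : M j * (q : ℝ) ^ j ≤ 1 * (q : ℝ) ^ j :=
          mul_le_mul_of_nonneg_right (hM_le_one j) hpj
        have h2 : (q : ℝ) ^ j ≤ (q : ℝ) ^ J := by
          apply pow_le_pow_right₀ (by linarith) (le_of_lt hj)
        nlinarith [mul_nonneg hε'.le hpj]
      · rw [if_neg hj]
        have h1 : M j ≤ ε' := hMJ j (by omega)
        have h2 := mul_le_mul_of_nonneg_right h1 hpj
        linarith
    calc ∑ j ∈ Finset.range (t + 1), M j * (q : ℝ) ^ j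
        ≤ ∑ j ∈ Finset.range (t + 1), ((if j < J then (q : ℝ) ^ J else 0) + ε' * (q : ℝ) ^ j) :=
          Finset.sum_le_sum hterm
      _ = (∑ j ∈ Finset.range (t + 1), if j < J then (q : ℝ) ^ J else 0)
            + ε' * ∑ j ∈ Finset.range (t + 1), (q : ℝ) ^ j := by
          rw [Finset.sum_add_distrib, Finset.mul_sum]
      _ ≤ (J : ℝ) * (q : ℝ) ^ J + ε' * (q : ℝ) ^ (t + 1) := by
          apply add_le_add
          · rw [← Finset.sum_filter, Finset.sum_const, nsmul_eq_mul]
            have hcard : (((Finset.range (t + 1)).filter (· < J)).card : ℝ) ≤ (J : ℝ) := by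
              have hsub : (Finset.range (t + 1)).filter (· < J) ⊆ Finset.range J := by
                intro x hx
                simp only [Finset.mem_filter, Finset.mem_range] at hx ⊢
                exact hx.2
              have := Finset.card_le_card hsub
              rw [Finset.card_range] at this
              exact_mod_cast this
            exact mul_le_mul_of_nonneg_right hcard (by positivity)
          · exact mul_le_mul_of_nonneg_left (geom_le' hq (t + 1)) hε'.le
  -- pointwise bound
  have hbound : ∀ α : ℝ,
      ‖(∑ n ∈ Finset.range N, f n * e (n * α)) / N‖
        ≤ ((q : ℝ) - 1) * ((J : ℝ) * (q : ℝ) ^ J + ε' * ((q : ℝ) * N)) / N := by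
    intro α
    rw [habslem]
    have h1 : ‖S f N α‖
        ≤ ((q : ℝ) - 1) * ∑ j ∈ Finset.range (t + 1), ‖S f (q ^ j) α‖ :=
      key hq hf hmod t N hloglt α
    have h2 : ∀ j, ‖S f (q ^ j) α‖ ≤ M j * (q : ℝ) ^ j := by
      intro j
      have h3 : ‖S f (q ^ j) α‖ / ((q ^ j : ℕ) : ℝ) ≤ M j :=
        le_ciSup (hbdd (q ^ j)) α
      have hpj : (0 : ℝ) < ((q ^ j : ℕ) : ℝ) := by positivity
      rw [div_le_iff₀ hpj] at h3
      calc ‖S f (q ^ j) α‖ ≤ M j * ((q ^ j : ℕ) : ℝ) := h3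
        _ = M j * (q : ℝ) ^ j := by push_cast; ring
    have h4 : ∑ j ∈ Finset.range (t + 1), ‖S f (q ^ j) α‖
        ≤ ∑ j ∈ Finset.range (t + 1), M j * (q : ℝ) ^ j :=
      Finset.sum_le_sum fun j _ => h2 j
    have h5 : (q : ℝ) ^ (t + 1) ≤ (q : ℝ) * N := by
      rw [pow_succ]
      calc (q : ℝ) ^ t * (q : ℝ) = (q : ℝ) * (q : ℝ) ^ t := by ring
        _ ≤ (q : ℝ) * N := by
            apply mul_le_mul_of_nonneg_left hlogle (by linarith)
    have h6 : ∑ j ∈ Finset.range (t + 1), ‖S f (q ^ j) α‖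
        ≤ (J : ℝ) * (q : ℝ) ^ J + ε' * ((q : ℝ) * N) := by
      calc ∑ j ∈ Finset.range (t + 1), ‖S f (q ^ j) α‖
          ≤ ∑ j ∈ Finset.range (t + 1), M j * (q : ℝ) ^ j := h4
        _ ≤ (J : ℝ) * (q : ℝ) ^ J + ε' * (q : ℝ) ^ (t + 1) := hsum
        _ ≤ (J : ℝ) * (q : ℝ) ^ J + ε' * ((q : ℝ) * N) := by
            have := mul_le_mul_of_nonneg_left h5 hε'.le
            linarith
    have h7 : ‖S f N α‖
        ≤ ((q : ℝ) - 1) * ((J : ℝ) * (q : ℝ) ^ J + ε' * ((q : ℝ) * N)) := by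
      calc ‖S f N α‖
          ≤ ((q : ℝ) - 1) * ∑ j ∈ Finset.range (t + 1), ‖S f (q ^ j) α‖ := h1
        _ ≤ ((q : ℝ) - 1) * ((J : ℝ) * (q : ℝ) ^ J + ε' * ((q : ℝ) * N)) :=
            mul_le_mul_of_nonneg_left h6 (by linarith)
    exact (div_le_div_iff_of_pos_right hNpos).mpr h7
  have hsupnonneg : 0 ≤ ⨆ α : ℝ, ‖(∑ n ∈ Finset.range N, f n * e (n * α)) / N‖ :=
    Real.iSup_nonneg fun α => norm_nonneg _
  rw [Real.dist_eq, sub_zero, _root_.abs_of_nonneg hsupnonneg]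
  refine lt_of_le_of_lt (ciSup_le hbound) ?_
  have hD : ((q : ℝ) - 1) * ((J : ℝ) * (q : ℝ) ^ J + ε' * ((q : ℝ) * N)) / N
      = C / N + ((q : ℝ) - 1) * ε' * (q : ℝ) := by
    rw [hCdef]
    field_simp
  have h8 : 2 * C < ε * N := by
    have h9 : 2 * C / ε < (N : ℝ) := lt_of_lt_of_le hN₁ hNN₁
    rw [div_lt_iff₀ hε] at h9
    nlinarith
  have h10 : C / N < ε / 2 := by
    rw [div_lt_iff₀ hNpos]
    linarith
  have h11 : ((q : ℝ) - 1) * ε' * (q : ℝ) ≤ ε / 2 := by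
    have heq : ((q : ℝ) - 1) * ε' * (q : ℝ) = ε * ((q : ℝ) - 1) / (2 * (q : ℝ)) := by
      rw [hε'def]
      field_simp
    rw [heq, div_le_div_iff₀ (by linarith) (by norm_num)]
    nlinarith
  rw [hD]
  linarith
end
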